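/- arXiv:2602.19175 — 9 statements merged into one kernel-verified Lean document; each statement's English description precedes it below -/
import Mathlib

section
/- Let ρ be a measure on a measurable space, let f be integrable on A ∪ B, and let A, B be measurable sets with 0 < ρ(A) < ∞, 0 < ρ(B) < ∞ and ρ(A ∩ B) ≥ G⁻¹·max(ρ(A), ρ(B)) for some G ≥ 1. Writing ⟨f⟩_A = ρ(A)⁻¹∫_A f dρ and a_A = ∫_A |f − ⟨f⟩_A| dρ (and similarly for B), one has |⟨f⟩_A − ⟨f⟩_B| ≤ G·(a_A/ρ(A) + a_B/ρ(B)). -/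
open MeasureTheory

theorem stmt_1 {Ω : Type*} [MeasurableSpace Ω] (ρ : Measure Ω) (f : Ω → ℝ)
    (A B : Set Ω) (hA : MeasurableSet A) (hB : MeasurableSet B)
    (hf : IntegrableOn f (A ∪ B) ρ)
    (hA0 : 0 < ρ A) (hA1 : ρ A < ⊤) (hB0 : 0 < ρ B) (hB1 : ρ B < ⊤)
    (G : ℝ) (hG : 1 ≤ G)
    (hAB : ENNReal.ofReal G⁻¹ * max (ρ A) (ρ B) ≤ ρ (A ∩ B)) :
    |((ρ A).toReal⁻¹ * ∫ x in A, f x ∂ρ) - ((ρ B).toReal⁻¹ * ∫ x in B, f x ∂ρ)|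
      ≤ G * ((∫ x in A, |f x - (ρ A).toReal⁻¹ * ∫ y in A, f y ∂ρ| ∂ρ) / (ρ A).toReal
           + (∫ x in B, |f x - (ρ B).toReal⁻¹ * ∫ y in B, f y ∂ρ| ∂ρ) / (ρ B).toReal) := by
  set mA := (ρ A).toReal with hmAdef
  set mB := (ρ B).toReal with hmBdef
  set cA := mA⁻¹ * ∫ x in A, f x ∂ρ with hcA
  set cB := mB⁻¹ * ∫ x in B, f x ∂ρ with hcB
  have hmA : 0 < mA := ENNReal.toReal_pos hA0.ne' hA1.ne
  have hmB : 0 < mB := ENNReal.toReal_pos hB0.ne' hB1.ne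
  have hG0 : 0 < G := lt_of_lt_of_le one_pos hG
  have hABfin : ρ (A ∩ B) < ⊤ := lt_of_le_of_lt (measure_mono Set.inter_subset_left) hA1
  set mI := (ρ (A ∩ B)).toReal with hmIdef
  have hIA : G⁻¹ * mA ≤ mI := by
    have h1 : ENNReal.ofReal G⁻¹ * ρ A ≤ ρ (A ∩ B) :=
      le_trans (mul_le_mul_right (le_max_left _ _) _) hAB
    have := ENNReal.toReal_mono hABfin.ne h1
    rwa [ENNReal.toReal_mul, ENNReal.toReal_ofReal (by positivity)] at this
  have hIB : G⁻¹ * mB ≤ mI := by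
    have h1 : ENNReal.ofReal G⁻¹ * ρ B ≤ ρ (A ∩ B) :=
      le_trans (mul_le_mul_right (le_max_right _ _) _) hAB
    have := ENNReal.toReal_mono hABfin.ne h1
    rwa [ENNReal.toReal_mul, ENNReal.toReal_ofReal (by positivity)] at this
  have hmI : 0 < mI := lt_of_lt_of_le (by positivity) hIA
  -- integrability
  have hfA : IntegrableOn f A ρ := hf.mono_set Set.subset_union_left
  have hfB : IntegrableOn f B ρ := hf.mono_set Set.subset_union_right
  have hgA : IntegrableOn (fun x => |f x - cA|) A ρ :=
    (hfA.sub (integrableOn_const hA1.ne)).abs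
  have hgB : IntegrableOn (fun x => |f x - cB|) B ρ :=
    (hfB.sub (integrableOn_const hB1.ne)).abs
  have hgAI : IntegrableOn (fun x => |f x - cA|) (A ∩ B) ρ :=
    hgA.mono_set Set.inter_subset_left
  have hgBI : IntegrableOn (fun x => |f x - cB|) (A ∩ B) ρ :=
    hgB.mono_set Set.inter_subset_right
  set aA := ∫ x in A, |f x - cA| ∂ρ with haA
  set aB := ∫ x in B, |f x - cB| ∂ρ with haB
  have haA0 : 0 ≤ aA := setIntegral_nonneg hA fun x _ => abs_nonneg _
  have haB0 : 0 ≤ aB := setIntegral_nonneg hB fun x _ => abs_nonneg _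
  -- key estimate
  have key : |cA - cB| * mI ≤ aA + aB := by
    have h1 : ∫ _x in A ∩ B, |cA - cB| ∂ρ = |cA - cB| * mI := by
      rw [setIntegral_const, smul_eq_mul, mul_comm]; rfl
    have h2 : ∫ _x in A ∩ B, |cA - cB| ∂ρ
        ≤ ∫ x in A ∩ B, (|f x - cA| + |f x - cB|) ∂ρ := by
      apply setIntegral_mono_on (integrableOn_const hABfin.ne) (hgAI.add hgBI)
        (hA.inter hB)
      intro x _
      calc |cA - cB| ≤ |cA - f x| + |f x - cB| := abs_sub_le _ _ _
        _ = |f x - cA| + |f x - cB| := by rw [abs_sub_comm]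
    rw [integral_add hgAI hgBI] at h2
    have h3 : ∫ x in A ∩ B, |f x - cA| ∂ρ ≤ aA :=
      setIntegral_mono_set hgA (Filter.Eventually.of_forall fun x => abs_nonneg _)
        (HasSubset.Subset.eventuallyLE Set.inter_subset_left)
    have h4 : ∫ x in A ∩ B, |f x - cB| ∂ρ ≤ aB :=
      setIntegral_mono_set hgB (Filter.Eventually.of_forall fun x => abs_nonneg _)
        (HasSubset.Subset.eventuallyLE Set.inter_subset_right)
    linarith [h1 ▸ h2]
  -- arithmetic
  have step1 : |cA - cB| ≤ aA / mI + aB / mI := by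
    rw [← add_div, le_div_iff₀ hmI]
    exact key
  have step2 : aA / mI ≤ G * (aA / mA) := by
    rw [div_le_iff₀ hmI]
    have : G * (aA / mA) * (G⁻¹ * mA) = aA := by field_simp
    calc aA = G * (aA / mA) * (G⁻¹ * mA) := this.symm
      _ ≤ G * (aA / mA) * mI := by
          apply mul_le_mul_of_nonneg_left hIA; positivity
  have step3 : aB / mI ≤ G * (aB / mB) := by
    rw [div_le_iff₀ hmI]
    have : G * (aB / mB) * (G⁻¹ * mB) = aB := by field_simp
    calc aB = G * (aB / mB) * (G⁻¹ * mB) := this.symm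
      _ ≤ G * (aB / mB) * mI := by
          apply mul_le_mul_of_nonneg_left hIB; positivity
  calc |cA - cB| ≤ aA / mI + aB / mI := step1
    _ ≤ G * (aA / mA) + G * (aB / mB) := add_le_add step2 step3
    _ = G * (aA / mA + aB / mB) := by ring
end

section
/- Let ρ be a measure on a measurable space, f an integrable function, G ≥ 1, and B₀, B₁, …, B_N measurable sets with 0 < ρ(B_j) < ∞ for every j and ρ(B_j ∩ B_{j+1}) ≥ G⁻¹·max(ρ(B_j), ρ(B_{j+1})) for every j ∈ {0,…,N−1}. Then, writing ⟨f⟩_{B_j} = ρ(B_j)⁻¹∫_{B_j} f dρ and a_{B_j} = ∫_{B_j} |f − ⟨f⟩_{B_j}| dρ, one has |⟨f⟩_{B_N} − ⟨f⟩_{B₀}| ≤ 2G·Σ_{j=0}^{N} a_{B_j}/ρ(B_j). -/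
open MeasureTheory

lemma avg_diff_le_aux {Ω : Type*} [MeasurableSpace Ω] (ρ : Measure Ω) (f : Ω → ℝ)
    (hf : Integrable f ρ) {A I : Set Ω} (hA : MeasurableSet A) (hIA : I ⊆ A)
    (hI0 : 0 < ρ I) (hAfin : ρ A < ⊤) :
    |((ρ I).toReal⁻¹ * ∫ x in I, f x ∂ρ) - ((ρ A).toReal⁻¹ * ∫ x in A, f x ∂ρ)|
      ≤ (ρ I).toReal⁻¹ * ∫ x in A, |f x - (ρ A).toReal⁻¹ * ∫ y in A, f y ∂ρ| ∂ρ := by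
  set c : ℝ := (ρ A).toReal⁻¹ * ∫ y in A, f y ∂ρ with hc
  have hIfin : ρ I < ⊤ := lt_of_le_of_lt (measure_mono hIA) hAfin
  have hIt : 0 < (ρ I).toReal := ENNReal.toReal_pos hI0.ne' hIfin.ne
  have hint : IntegrableOn (fun x => f x - c) A ρ :=
    (hf.integrableOn).sub (integrableOn_const hAfin.ne)
  have hintI : IntegrableOn (fun x => f x - c) I ρ := hint.mono_set hIA
  have h1 : ((ρ I).toReal⁻¹ * ∫ x in I, f x ∂ρ) - c
      = (ρ I).toReal⁻¹ * ∫ x in I, (f x - c) ∂ρ := by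
    rw [integral_sub hf.integrableOn (integrableOn_const hIfin.ne)]
    rw [setIntegral_const, measureReal_def, smul_eq_mul]
    field_simp
  rw [h1, abs_mul, abs_of_nonneg (by positivity)]
  gcongr
  calc |∫ x in I, (f x - c) ∂ρ| ≤ ∫ x in I, |f x - c| ∂ρ := by simpa using norm_integral_le_integral_norm (fun x => f x - c)
    _ ≤ ∫ x in A, |f x - c| ∂ρ := by
        apply setIntegral_mono_set hint.abs (Filter.Eventually.of_forall fun x => abs_nonneg _)
        exact HasSubset.Subset.eventuallyLE hIA

theorem stmt_2 {Ω : Type*} [MeasurableSpace Ω] (ρ : Measure Ω) (f : Ω → ℝ)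
    (hf : Integrable f ρ) (G : ℝ) (hG : 1 ≤ G) (N : ℕ)
    (B : Fin (N + 1) → Set Ω) (hB : ∀ j, MeasurableSet (B j))
    (hB0 : ∀ j, 0 < ρ (B j)) (hB1 : ∀ j, ρ (B j) < ⊤)
    (hchain : ∀ k : Fin N,
      ENNReal.ofReal G⁻¹ * max (ρ (B k.castSucc)) (ρ (B k.succ)) ≤ ρ (B k.castSucc ∩ B k.succ)) :
    |((ρ (B (Fin.last N))).toReal⁻¹ * ∫ x in B (Fin.last N), f x ∂ρ)
        - ((ρ (B 0)).toReal⁻¹ * ∫ x in B 0, f x ∂ρ)|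
      ≤ 2 * G * ∑ j : Fin (N + 1),
          (∫ x in B j, |f x - (ρ (B j)).toReal⁻¹ * ∫ y in B j, f y ∂ρ| ∂ρ) / (ρ (B j)).toReal := by
  classical
  set avg : Fin (N + 1) → ℝ := fun j => (ρ (B j)).toReal⁻¹ * ∫ x in B j, f x ∂ρ with havg
  set a : Fin (N + 1) → ℝ := fun j => ∫ x in B j, |f x - avg j| ∂ρ with ha
  set c : Fin (N + 1) → ℝ := fun j => a j / (ρ (B j)).toReal with hcdef
  have hGpos : 0 < G := lt_of_lt_of_le one_pos hG
  have hρt : ∀ j, 0 < (ρ (B j)).toReal := fun j => ENNReal.toReal_pos (hB0 j).ne' (hB1 j).ne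
  have hann : ∀ j, 0 ≤ a j := fun j => integral_nonneg fun x => abs_nonneg _
  have hcnn : ∀ j, 0 ≤ c j := fun j => div_nonneg (hann j) (hρt j).le
  have key : ∀ k : Fin N, |avg k.succ - avg k.castSucc| ≤ G * c k.castSucc + G * c k.succ := by
    intro k
    set I := B k.castSucc ∩ B k.succ with hI
    have hI0 : 0 < ρ I := by
      refine lt_of_lt_of_le (ENNReal.mul_pos ?_ ?_) (hchain k)
      · exact (ENNReal.ofReal_pos.2 (inv_pos.2 hGpos)).ne'
      · exact (lt_max_of_lt_left (hB0 k.castSucc)).ne'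
    have hIfin : ρ I < ⊤ := lt_of_le_of_lt (measure_mono Set.inter_subset_left) (hB1 _)
    have hIt : 0 < (ρ I).toReal := ENNReal.toReal_pos hI0.ne' hIfin.ne
    have hinv : ∀ j, j = k.castSucc ∨ j = k.succ →
        (ρ I).toReal⁻¹ ≤ G * (ρ (B j)).toReal⁻¹ := by
      intro j hj
      have hle : ENNReal.ofReal G⁻¹ * ρ (B j) ≤ ρ I := by
        refine le_trans ?_ (hchain k)
        gcongr
        rcases hj with h | h <;> simp [h, le_max_left, le_max_right]
      have hle' : G⁻¹ * (ρ (B j)).toReal ≤ (ρ I).toReal := by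
        have := ENNReal.toReal_mono hIfin.ne hle
        rwa [ENNReal.toReal_mul, ENNReal.toReal_ofReal (inv_nonneg.2 hGpos.le)] at this
      have h0 : 0 < G⁻¹ * (ρ (B j)).toReal := mul_pos (inv_pos.2 hGpos) (hρt j)
      calc (ρ I).toReal⁻¹ ≤ (G⁻¹ * (ρ (B j)).toReal)⁻¹ := by
            exact inv_anti₀ h0 hle'
        _ = G * (ρ (B j)).toReal⁻¹ := by rw [mul_inv, inv_inv]
    have h1 : |((ρ I).toReal⁻¹ * ∫ x in I, f x ∂ρ) - avg k.castSucc|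
        ≤ (ρ I).toReal⁻¹ * a k.castSucc :=
      avg_diff_le_aux ρ f hf (hB _) Set.inter_subset_left hI0 (hB1 _)
    have h2 : |((ρ I).toReal⁻¹ * ∫ x in I, f x ∂ρ) - avg k.succ|
        ≤ (ρ I).toReal⁻¹ * a k.succ :=
      avg_diff_le_aux ρ f hf (hB _) Set.inter_subset_right hI0 (hB1 _)
    have tri : |avg k.succ - avg k.castSucc|
        ≤ |((ρ I).toReal⁻¹ * ∫ x in I, f x ∂ρ) - avg k.succ|
          + |((ρ I).toReal⁻¹ * ∫ x in I, f x ∂ρ) - avg k.castSucc| := by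
      rw [abs_sub_comm _ (avg k.succ)] ; exact abs_sub_le _ _ _
    have b1 : (ρ I).toReal⁻¹ * a k.castSucc ≤ G * c k.castSucc := by
      have := hinv k.castSucc (Or.inl rfl)
      calc (ρ I).toReal⁻¹ * a k.castSucc ≤ (G * (ρ (B k.castSucc)).toReal⁻¹) * a k.castSucc := by
            exact mul_le_mul_of_nonneg_right this (hann _)
        _ = G * c k.castSucc := by rw [hcdef]; field_simp
    have b2 : (ρ I).toReal⁻¹ * a k.succ ≤ G * c k.succ := by
      have := hinv k.succ (Or.inr rfl)
      calc (ρ I).toReal⁻¹ * a k.succ ≤ (G * (ρ (B k.succ)).toReal⁻¹) * a k.succ := by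
            exact mul_le_mul_of_nonneg_right this (hann _)
        _ = G * c k.succ := by rw [hcdef]; field_simp
    linarith [h1, h2, tri, b1, b2]
  -- telescoping
  have gmem : ∀ i : ℕ, min i N < N + 1 := fun i => Nat.lt_succ_of_le (min_le_right _ _)
  set g : ℕ → ℝ := fun i => avg ⟨min i N, gmem i⟩ with hg
  have tele := dist_le_range_sum_dist g N
  have hg0 : g 0 = avg 0 := by simp [hg]
  have hgN : g N = avg (Fin.last N) := by simp [hg, Fin.last]
  have hsum : ∑ i ∈ Finset.range N, dist (g i) (g (i + 1))
      = ∑ k : Fin N, |avg k.succ - avg k.castSucc| := by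
    rw [← Fin.sum_univ_eq_sum_range]
    refine Finset.sum_congr rfl fun k _ => ?_
    have h1 : (⟨min (k : ℕ) N, gmem _⟩ : Fin (N + 1)) = k.castSucc := by
      ext; simp [Nat.min_eq_left (le_of_lt k.isLt)]
    have h2 : (⟨min ((k : ℕ) + 1) N, gmem _⟩ : Fin (N + 1)) = k.succ := by
      ext; simp [Nat.min_eq_left (Nat.succ_le_of_lt k.isLt)]
    simp only [hg, h1, h2, Real.dist_eq]
    rw [abs_sub_comm]
  have main : |avg (Fin.last N) - avg 0| ≤ ∑ k : Fin N, |avg k.succ - avg k.castSucc| := by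
    rw [← hsum, ← hg0, ← hgN]
    simpa [Real.dist_eq, abs_sub_comm] using tele
  have step2 : ∑ k : Fin N, |avg k.succ - avg k.castSucc|
      ≤ ∑ k : Fin N, (G * c k.castSucc + G * c k.succ) :=
    Finset.sum_le_sum fun k _ => key k
  have s1 : ∑ k : Fin N, c k.castSucc ≤ ∑ j : Fin (N + 1), c j := by
    rw [Fin.sum_univ_castSucc]
    exact le_add_of_nonneg_right (hcnn _)
  have s2 : ∑ k : Fin N, c k.succ ≤ ∑ j : Fin (N + 1), c j := by
    rw [Fin.sum_univ_succ]
    exact le_add_of_nonneg_left (hcnn _)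
  have expand : ∑ k : Fin N, (G * c k.castSucc + G * c k.succ)
      = G * (∑ k : Fin N, c k.castSucc) + G * (∑ k : Fin N, c k.succ) := by
    rw [Finset.sum_add_distrib, Finset.mul_sum, Finset.mul_sum]
  calc |avg (Fin.last N) - avg 0| ≤ ∑ k : Fin N, |avg k.succ - avg k.castSucc| := main
    _ ≤ G * (∑ k : Fin N, c k.castSucc) + G * (∑ k : Fin N, c k.succ) := by
        rw [← expand]; exact step2
    _ ≤ G * (∑ j : Fin (N + 1), c j) + G * (∑ j : Fin (N + 1), c j) := by
        gcongr
    _ = 2 * G * ∑ j : Fin (N + 1), c j := by ring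
end

section
/- Let (X,d) be a metric space, S ⊆ X open, and ρ a Borel measure on X with ρ(X∖S)=0 which is doubling on S with constant β ≥ 1 (i.e. ρ(B(x,2r)) ≤ β·ρ(B(x,r)) for every x ∈ S and r > 0). Let 𝓕 be a countable family of open balls with centers in S such that Σ_{B∈𝓕} χ_{2B}(x) ≤ E for every x ∈ S, where 2B is the ball with the same center and twice the radius. Then for every z ∈ S, r > 0 and F > 1, one has Σ_{B∈𝓕, B ⊆ B(z,Fr)} ρ(B) ≤ E·β²·F^{log β/log 2}·ρ(B(z,r)). -/
open MeasureTheory Metric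
open scoped ENNReal

attribute [local instance] Classical.propDecidable

theorem stmt_3 {X : Type*} [MetricSpace X] [MeasurableSpace X] [BorelSpace X]
    (S : Set X) (hS : IsOpen S)
    (ρ : Measure X) (hρS : ρ Sᶜ = 0)
    (β : ℝ) (hβ : 1 ≤ β)
    (hdoub : ∀ x ∈ S, ∀ r : ℝ, 0 < r →
      ρ (ball x (2 * r)) ≤ ENNReal.ofReal β * ρ (ball x r))
    {ι : Type*} [Countable ι] (c : ι → X) (rad : ι → ℝ)
    (hc : ∀ i, c i ∈ S) (hr : ∀ i, 0 < rad i)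
    (E : ℝ)
    (hE : ∀ x ∈ S,
      ∑' i, (ball (c i) (2 * rad i)).indicator (fun _ => (1 : ℝ≥0∞)) x ≤ ENNReal.ofReal E) :
    ∀ z ∈ S, ∀ r : ℝ, 0 < r → ∀ F : ℝ, 1 < F →
      (∑' i, if ball (c i) (rad i) ⊆ ball z (F * r) then ρ (ball (c i) (rad i)) else 0)
        ≤ ENNReal.ofReal (E * β ^ 2 * F ^ (Real.log β / Real.log 2)) * ρ (ball z r) := by
  intro z hz r hrpos F hF
  have hF0 : (0 : ℝ) < F := lt_trans one_pos hF
  have hβ0 : (0 : ℝ) < β := lt_of_lt_of_le one_pos hβ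
  set t := ball z (F * r) with ht
  -- Step 1: sum of selected ball measures ≤ ofReal E * ρ t
  have key1 : (∑' i, if ball (c i) (rad i) ⊆ t then ρ (ball (c i) (rad i)) else 0)
      ≤ ENNReal.ofReal E * ρ t := by
    calc (∑' i, if ball (c i) (rad i) ⊆ t then ρ (ball (c i) (rad i)) else 0)
        ≤ ∑' i, ∫⁻ x in t,
            (ball (c i) (2 * rad i)).indicator (fun _ => (1 : ℝ≥0∞)) x ∂ρ := by
          refine ENNReal.tsum_le_tsum fun i => ?_
          rw [lintegral_indicator_const measurableSet_ball, one_mul,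
            Measure.restrict_apply measurableSet_ball]
          split_ifs with h
          · refine measure_mono (Set.subset_inter ?_ h)
            exact ball_subset_ball (by linarith [hr i])
          · exact zero_le
      _ = ∫⁻ x in t, ∑' i,
            (ball (c i) (2 * rad i)).indicator (fun _ => (1 : ℝ≥0∞)) x ∂ρ :=
          (lintegral_tsum fun i =>
            (measurable_const.indicator measurableSet_ball).aemeasurable).symm
      _ ≤ ∫⁻ _x in t, ENNReal.ofReal E ∂ρ := by
          refine lintegral_mono_ae ?_
          have hae : ∀ᵐ x ∂ρ, x ∈ S := by
            rw [ae_iff]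
            exact hρS
          exact ae_restrict_of_ae (hae.mono fun x hx => hE x hx)
      _ = ENNReal.ofReal E * ρ t := by rw [setLIntegral_const]
  -- Step 2: iterated doubling
  have doub : ∀ n : ℕ, ρ (ball z (2 ^ n * r)) ≤ ENNReal.ofReal β ^ n * ρ (ball z r) := by
    intro n
    induction n with
    | zero => simp
    | succ n ih =>
      have h2 : (2 : ℝ) ^ (n + 1) * r = 2 * (2 ^ n * r) := by ring
      rw [h2]
      calc ρ (ball z (2 * (2 ^ n * r)))
          ≤ ENNReal.ofReal β * ρ (ball z (2 ^ n * r)) := hdoub z hz _ (by positivity)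
        _ ≤ ENNReal.ofReal β * (ENNReal.ofReal β ^ n * ρ (ball z r)) := mul_le_mul_right ih _
        _ = ENNReal.ofReal β ^ (n + 1) * ρ (ball z r) := by ring
  set n : ℕ := ⌈Real.logb 2 F⌉₊ with hn
  have hF2n : F ≤ 2 ^ n := by
    have h1 : F = (2 : ℝ) ^ (Real.logb 2 F) :=
      (Real.rpow_logb (by norm_num) (by norm_num) hF0).symm
    have h2 : (2 : ℝ) ^ (Real.logb 2 F) ≤ (2 : ℝ) ^ (n : ℝ) :=
      Real.rpow_le_rpow_of_exponent_le one_le_two (Nat.le_ceil _)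
    rw [Real.rpow_natCast] at h2
    linarith
  have hsub : t ⊆ ball z (2 ^ n * r) :=
    ball_subset_ball (mul_le_mul_of_nonneg_right hF2n hrpos.le)
  -- Step 3: numeric bound β ^ n ≤ β ^ 2 * F ^ (log β / log 2)
  have hnum : β ^ n ≤ β ^ 2 * F ^ (Real.log β / Real.log 2) := by
    have hlogb0 : 0 ≤ Real.logb 2 F := Real.logb_nonneg one_lt_two hF.le
    have hle : (n : ℝ) ≤ Real.logb 2 F + 1 := (Nat.ceil_lt_add_one hlogb0).le
    have h1 : β ^ n = β ^ (n : ℝ) := (Real.rpow_natCast β n).symm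
    have h2 : β ^ (n : ℝ) ≤ β ^ (Real.logb 2 F + 1) :=
      Real.rpow_le_rpow_of_exponent_le hβ hle
    have h3 : β ^ (Real.logb 2 F + 1) = β ^ (Real.logb 2 F) * β := by
      rw [Real.rpow_add hβ0, Real.rpow_one]
    have h4 : β ^ (Real.logb 2 F) = F ^ (Real.log β / Real.log 2) := by
      rw [Real.rpow_def_of_pos hβ0, Real.rpow_def_of_pos hF0, Real.logb]
      congr 1
      ring
    have h5 : (0 : ℝ) ≤ F ^ (Real.log β / Real.log 2) := Real.rpow_nonneg hF0.le _
    rw [h1]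
    calc β ^ (n : ℝ) ≤ β ^ (Real.logb 2 F) * β := by rw [← h3]; exact h2
      _ = F ^ (Real.log β / Real.log 2) * β := by rw [h4]
      _ ≤ β ^ 2 * F ^ (Real.log β / Real.log 2) := by nlinarith [mul_nonneg (mul_nonneg h5 hβ0.le) (sub_nonneg.mpr hβ)]
  -- Combine
  calc (∑' i, if ball (c i) (rad i) ⊆ t then ρ (ball (c i) (rad i)) else 0)
      ≤ ENNReal.ofReal E * ρ t := key1
    _ ≤ ENNReal.ofReal E * (ENNReal.ofReal β ^ n * ρ (ball z r)) :=
        mul_le_mul_right (le_trans (measure_mono hsub) (doub n)) _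
    _ ≤ ENNReal.ofReal (E * β ^ 2 * F ^ (Real.log β / Real.log 2)) * ρ (ball z r) := by
        rw [← mul_assoc]
        refine mul_le_mul_left ?_ _
        rcases le_or_gt E 0 with hE0 | hE0
        · simp [ENNReal.ofReal_eq_zero.mpr hE0]
        · rw [← ENNReal.ofReal_pow hβ0.le, ← ENNReal.ofReal_mul hE0.le]
          refine ENNReal.ofReal_le_ofReal ?_
          calc E * β ^ n ≤ E * (β ^ 2 * F ^ (Real.log β / Real.log 2)) :=
                mul_le_mul_of_nonneg_left hnum hE0.le
            _ = E * β ^ 2 * F ^ (Real.log β / Real.log 2) := by ring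
end

section
/- Let (X,d) be a metric space, B ⊆ X a Borel set, and μ, ρ Borel measures on X such that a₁·μ(A) ≤ ρ(A) ≤ a₂·μ(A) for every Borel set A ⊆ B, where 0 < a₁ ≤ a₂. Assume 0 < μ(B) < ∞ and 0 < ρ(B) < ∞, let f be integrable over B with respect to both μ and ρ, let g : X → [0,∞) be Borel measurable, and suppose the Poincaré-type inequality ∫_B |f − μ(B)⁻¹∫_B f dμ| dμ ≤ c·∫_B g dμ holds for some c ≥ 0. Then ∫_B |f − ρ(B)⁻¹∫_B f dρ| dρ ≤ 2·(a₂/a₁)·c·∫_B g dρ. -/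
open MeasureTheory

theorem stmt_4 {X : Type*} [MetricSpace X] [MeasurableSpace X] [BorelSpace X]
    (B : Set X) (hB : MeasurableSet B)
    (μ ρ : Measure X) (a₁ a₂ : ℝ) (ha₁ : 0 < a₁) (ha₁₂ : a₁ ≤ a₂)
    (hcomp : ∀ A : Set X, MeasurableSet A → A ⊆ B →
      ENNReal.ofReal a₁ * μ A ≤ ρ A ∧ ρ A ≤ ENNReal.ofReal a₂ * μ A)
    (hμB0 : 0 < μ B) (hμB1 : μ B < ⊤) (hρB0 : 0 < ρ B) (hρB1 : ρ B < ⊤)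
    (f : X → ℝ) (hfμ : IntegrableOn f B μ) (hfρ : IntegrableOn f B ρ)
    (g : X → ℝ) (hg : Measurable g) (hg0 : ∀ x, 0 ≤ g x)
    (cst : ℝ) (hcst : 0 ≤ cst)
    (hpoin : ENNReal.ofReal (∫ x in B, |f x - (μ B).toReal⁻¹ * ∫ y in B, f y ∂μ| ∂μ)
      ≤ ENNReal.ofReal cst * ∫⁻ x in B, ENNReal.ofReal (g x) ∂μ) :
    ENNReal.ofReal (∫ x in B, |f x - (ρ B).toReal⁻¹ * ∫ y in B, f y ∂ρ| ∂ρ)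
      ≤ ENNReal.ofReal (2 * (a₂ / a₁) * cst) * ∫⁻ x in B, ENNReal.ofReal (g x) ∂ρ := by
  set mμ := (μ B).toReal⁻¹ * ∫ y in B, f y ∂μ with hmμdef
  set mρ := (ρ B).toReal⁻¹ * ∫ y in B, f y ∂ρ with hmρdef
  have hρBt : 0 < (ρ B).toReal := ENNReal.toReal_pos hρB0.ne' hρB1.ne
  -- measure comparisons on restrictions
  have hle2 : ρ.restrict B ≤ (ENNReal.ofReal a₂) • μ.restrict B := by
    refine Measure.le_iff.2 fun s hs => ?_
    simp only [Measure.smul_apply, smul_eq_mul, Measure.restrict_apply hs]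
    exact (hcomp (s ∩ B) (hs.inter hB) Set.inter_subset_right).2
  have hle1 : (ENNReal.ofReal a₁) • μ.restrict B ≤ ρ.restrict B := by
    refine Measure.le_iff.2 fun s hs => ?_
    simp only [Measure.smul_apply, smul_eq_mul, Measure.restrict_apply hs]
    exact (hcomp (s ∩ B) (hs.inter hB) Set.inter_subset_right).1
  -- integrabilities
  have hconstρ : IntegrableOn (fun _ => mμ) B ρ :=
    integrableOn_const hρB1.ne
  have hconstμ : IntegrableOn (fun _ => mμ) B μ :=
    integrableOn_const hμB1.ne
  have hconstρ' : IntegrableOn (fun _ => mρ) B ρ :=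
    integrableOn_const hρB1.ne
  have habsρ : IntegrableOn (fun x => |f x - mμ|) B ρ := (hfρ.sub hconstρ).abs
  have habsμ : IntegrableOn (fun x => |f x - mμ|) B μ := (hfμ.sub hconstμ).abs
  -- the mean over ρ is close to mμ
  have hmρ : mρ - mμ = (ρ B).toReal⁻¹ * ∫ x in B, (f x - mμ) ∂ρ := by
    rw [integral_sub hfρ hconstρ, integral_const]
    simp only [measureReal_def, Measure.restrict_apply MeasurableSet.univ, Set.univ_inter, smul_eq_mul]
    rw [hmρdef]
    field_simp
  have hb : |mρ - mμ| ≤ (ρ B).toReal⁻¹ * ∫ x in B, |f x - mμ| ∂ρ := by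
    rw [hmρ, abs_mul, abs_of_nonneg (by positivity : (0:ℝ) ≤ (ρ B).toReal⁻¹)]
    refine mul_le_mul_of_nonneg_left ?_ (by positivity)
    calc |∫ x in B, (f x - mμ) ∂ρ| = ‖∫ x in B, (f x - mμ) ∂ρ‖ :=
          (Real.norm_eq_abs _).symm
      _ ≤ ∫ x in B, ‖f x - mμ‖ ∂ρ := norm_integral_le_integral_norm _
      _ = ∫ x in B, |f x - mμ| ∂ρ := by simp [Real.norm_eq_abs]
  -- key real inequality
  have key : ∫ x in B, |f x - mρ| ∂ρ ≤ 2 * ∫ x in B, |f x - mμ| ∂ρ := by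
    have step1 : ∫ x in B, |f x - mρ| ∂ρ
        ≤ ∫ x in B, (|f x - mμ| + |mρ - mμ|) ∂ρ := by
      refine integral_mono (hfρ.sub hconstρ').abs
        (habsρ.add (integrableOn_const hρB1.ne)) fun x => ?_
      calc |f x - mρ| ≤ |f x - mμ| + |mμ - mρ| := abs_sub_le _ _ _
        _ = |f x - mμ| + |mρ - mμ| := by rw [abs_sub_comm mμ mρ]
    have step2 : ∫ x in B, (|f x - mμ| + |mρ - mμ|) ∂ρ
        = (∫ x in B, |f x - mμ| ∂ρ) + (ρ B).toReal * |mρ - mμ| := by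
      rw [integral_add habsρ (integrableOn_const hρB1.ne), integral_const]
      simp [measureReal_def, Measure.restrict_apply MeasurableSet.univ, smul_eq_mul]
    have step3 : (ρ B).toReal * |mρ - mμ|
        ≤ ∫ x in B, |f x - mμ| ∂ρ := by
      calc (ρ B).toReal * |mρ - mμ|
          ≤ (ρ B).toReal * ((ρ B).toReal⁻¹ * ∫ x in B, |f x - mμ| ∂ρ) :=
            mul_le_mul_of_nonneg_left hb ENNReal.toReal_nonneg
        _ = ∫ x in B, |f x - mμ| ∂ρ := by
            rw [← mul_assoc, mul_inv_cancel₀ hρBt.ne', one_mul]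
    linarith [step1, step2, step3]
  -- lintegral versions
  have hofρ : ENNReal.ofReal (∫ x in B, |f x - mμ| ∂ρ)
      = ∫⁻ x in B, ENNReal.ofReal |f x - mμ| ∂ρ :=
    ofReal_integral_eq_lintegral_ofReal habsρ
      (Filter.Eventually.of_forall fun x => abs_nonneg _)
  have hofμ : ENNReal.ofReal (∫ x in B, |f x - mμ| ∂μ)
      = ∫⁻ x in B, ENNReal.ofReal |f x - mμ| ∂μ :=
    ofReal_integral_eq_lintegral_ofReal habsμ
      (Filter.Eventually.of_forall fun x => abs_nonneg _)
  have Lρμ : ∫⁻ x in B, ENNReal.ofReal |f x - mμ| ∂ρ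
      ≤ ENNReal.ofReal a₂ * ∫⁻ x in B, ENNReal.ofReal |f x - mμ| ∂μ := by
    calc ∫⁻ x in B, ENNReal.ofReal |f x - mμ| ∂ρ
        ≤ ∫⁻ x, ENNReal.ofReal |f x - mμ| ∂((ENNReal.ofReal a₂) • μ.restrict B) :=
          lintegral_mono' hle2 le_rfl
      _ = ENNReal.ofReal a₂ * ∫⁻ x in B, ENNReal.ofReal |f x - mμ| ∂μ :=
          lintegral_smul_measure _ _
  have ha₁ne : (ENNReal.ofReal a₁) ≠ 0 := (ENNReal.ofReal_pos.2 ha₁).ne'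
  have hGμ : ∫⁻ x in B, ENNReal.ofReal (g x) ∂μ
      ≤ (ENNReal.ofReal a₁)⁻¹ * ∫⁻ x in B, ENNReal.ofReal (g x) ∂ρ := by
    have h : ENNReal.ofReal a₁ * ∫⁻ x in B, ENNReal.ofReal (g x) ∂μ
        ≤ ∫⁻ x in B, ENNReal.ofReal (g x) ∂ρ := by
      rw [← smul_eq_mul, ← lintegral_smul_measure]
      exact lintegral_mono' hle1 le_rfl
    calc ∫⁻ x in B, ENNReal.ofReal (g x) ∂μ
        = (ENNReal.ofReal a₁)⁻¹ * (ENNReal.ofReal a₁ * ∫⁻ x in B, ENNReal.ofReal (g x) ∂μ) := by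
          rw [← mul_assoc, ENNReal.inv_mul_cancel ha₁ne ENNReal.ofReal_ne_top, one_mul]
      _ ≤ _ := mul_le_mul_right h _
  have hconsts : ENNReal.ofReal (2 * (a₂ / a₁) * cst)
      = 2 * ENNReal.ofReal a₂ * (ENNReal.ofReal cst * (ENNReal.ofReal a₁)⁻¹) := by
    have ha₂ : 0 < a₂ := ha₁.trans_le ha₁₂
    rw [ENNReal.ofReal_mul (by positivity), ENNReal.ofReal_mul (by norm_num),
      ENNReal.ofReal_div_of_pos ha₁, ENNReal.ofReal_ofNat, div_eq_mul_inv]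
    ring
  calc ENNReal.ofReal (∫ x in B, |f x - mρ| ∂ρ)
      ≤ ENNReal.ofReal (2 * ∫ x in B, |f x - mμ| ∂ρ) := ENNReal.ofReal_le_ofReal key
    _ = 2 * ∫⁻ x in B, ENNReal.ofReal |f x - mμ| ∂ρ := by
        rw [ENNReal.ofReal_mul (by norm_num), hofρ, ENNReal.ofReal_ofNat]
    _ ≤ 2 * (ENNReal.ofReal a₂ * ∫⁻ x in B, ENNReal.ofReal |f x - mμ| ∂μ) :=
        mul_le_mul_right Lρμ _
    _ = 2 * ENNReal.ofReal a₂ * ENNReal.ofReal (∫ x in B, |f x - mμ| ∂μ) := by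
        rw [hofμ, mul_assoc]
    _ ≤ 2 * ENNReal.ofReal a₂ * (ENNReal.ofReal cst * ∫⁻ x in B, ENNReal.ofReal (g x) ∂μ) :=
        mul_le_mul_right hpoin _
    _ ≤ 2 * ENNReal.ofReal a₂ *
        (ENNReal.ofReal cst * ((ENNReal.ofReal a₁)⁻¹ * ∫⁻ x in B, ENNReal.ofReal (g x) ∂ρ)) := by
        gcongr
    _ = ENNReal.ofReal (2 * (a₂ / a₁) * cst) * ∫⁻ x in B, ENNReal.ofReal (g x) ∂ρ := by
        rw [hconsts]; ring
end

section
/- Let (K,d) be a nonempty compact metric space and m a finite Borel measure on K such that m(B(y,r)) > 0 for every y ∈ K and r > 0. Let g : K → ℝ be continuous and, for each t ∈ (0,1], let g_t : K → ℝ be Borel measurable, with sup_{y∈K} |g_t(y) − g(y)| → 0 as t → 0⁺. Then lim_{t→0⁺} ( −t·log ∫_K e^{−g_t(y)/t} dm(y) ) = min_{y∈K} g(y). -/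
open MeasureTheory

theorem stmt_5 {K : Type*} [MetricSpace K] [CompactSpace K] [Nonempty K]
    [MeasurableSpace K] [BorelSpace K]
    (m : Measure K) [IsFiniteMeasure m]
    (hm : ∀ (y : K) (r : ℝ), 0 < r → 0 < m (Metric.ball y r))
    (g : K → ℝ) (hg : Continuous g)
    (gt : ℝ → K → ℝ) (hgt : ∀ t ∈ Set.Ioc (0 : ℝ) 1, Measurable (gt t))
    (hconv : ∀ ε > (0 : ℝ), ∃ δ > (0 : ℝ),
      ∀ t ∈ Set.Ioc (0 : ℝ) 1, t < δ → ∀ y : K, |gt t y - g y| ≤ ε) :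
    Filter.Tendsto (fun t : ℝ => -t * Real.log (∫ y, Real.exp (-(gt t y) / t) ∂m))
      (nhdsWithin 0 (Set.Ioi 0)) (nhds (⨅ y, g y)) := by
  obtain ⟨x, -, hx⟩ := isCompact_univ.exists_isMinOn Set.univ_nonempty hg.continuousOn
  have hx' : ∀ y, g x ≤ g y := fun y => hx (Set.mem_univ y)
  have hbdd : BddBelow (Set.range g) := ⟨g x, Set.forall_mem_range.mpr hx'⟩
  have hM : (⨅ y, g y) = g x := le_antisymm (ciInf_le hbdd x) (le_ciInf hx')
  set M := ⨅ y, g y with hMdef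
  have hMle : ∀ y, M ≤ g y := fun y => hM ▸ hx' y
  rw [Metric.tendsto_nhdsWithin_nhds]
  intro ε hε
  set ε' := ε / 4 with hε'def
  have hε' : 0 < ε' := by positivity
  obtain ⟨δ₁, hδ₁, hδ₁'⟩ := hconv ε' hε'
  obtain ⟨r, hr, hr'⟩ := Metric.continuous_iff.mp hg x ε' hε'
  set B := Metric.ball x r with hBdef
  have hmB : 0 < (m B).toReal :=
    ENNReal.toReal_pos (hm x r hr).ne' (measure_ne_top m B)
  have hmK : 0 < (m Set.univ).toReal :=
    ENNReal.toReal_pos (lt_of_lt_of_le (hm x r hr) (measure_mono (Set.subset_univ _))).ne'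
      (measure_ne_top m _)
  set c₁ := |Real.log (m Set.univ).toReal| with hc₁def
  set c₂ := |Real.log (m B).toReal| with hc₂def
  have hc₁ : 0 ≤ c₁ := abs_nonneg _
  have hc₂ : 0 ≤ c₂ := abs_nonneg _
  refine ⟨min δ₁ (min 1 (ε' / (c₁ + c₂ + 1))), by positivity, ?_⟩
  intro t ht hdist
  have ht0 : 0 < t := ht
  have htd : t < min δ₁ (min 1 (ε' / (c₁ + c₂ + 1))) := by
    rwa [Real.dist_eq, sub_zero, abs_of_pos ht0] at hdist
  have htδ₁ : t < δ₁ := lt_of_lt_of_le htd (min_le_left _ _)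
  have ht1 : t ≤ 1 := le_of_lt (lt_of_lt_of_le htd ((min_le_right _ _).trans (min_le_left _ _)))
  have htc : t < ε' / (c₁ + c₂ + 1) :=
    lt_of_lt_of_le htd ((min_le_right _ _).trans (min_le_right _ _))
  have htcc : t * (c₁ + c₂ + 1) < ε' := by
    rw [← lt_div_iff₀ (by positivity)]; exact htc
  have htIoc : t ∈ Set.Ioc (0 : ℝ) 1 := ⟨ht0, ht1⟩
  have happrox : ∀ y, |gt t y - g y| ≤ ε' := hδ₁' t htIoc htδ₁
  have hlow : ∀ y, g y - ε' ≤ gt t y := fun y => by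
    have := (abs_le.mp (happrox y)).1; linarith
  have hup : ∀ y, gt t y ≤ g y + ε' := fun y => by
    have := (abs_le.mp (happrox y)).2; linarith
  have hmeas : Measurable fun y => Real.exp (-(gt t y) / t) :=
    ((hgt t htIoc).neg.div_const t).exp
  -- pointwise upper bound
  have hbound : ∀ y, Real.exp (-(gt t y) / t) ≤ Real.exp ((ε' - M) / t) := by
    intro y
    apply Real.exp_le_exp.mpr
    apply div_le_div_of_nonneg_right ?_ ht0.le |>.trans_eq rfl
    · have := hlow y; have := hMle y; linarith
  -- integrability
  have hint : Integrable (fun y => Real.exp (-(gt t y) / t)) m := by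
    refine Integrable.mono' (integrable_const (Real.exp ((ε' - M) / t)))
      hmeas.aestronglyMeasurable ?_
    filter_upwards with y
    rw [Real.norm_eq_abs, abs_of_pos (Real.exp_pos _)]
    exact hbound y
  set I := ∫ y, Real.exp (-(gt t y) / t) ∂m with hIdef
  -- upper bound on integral
  have hIle : I ≤ (m Set.univ).toReal * Real.exp ((ε' - M) / t) := by
    calc I ≤ ∫ _y, Real.exp ((ε' - M) / t) ∂m :=
            integral_mono hint (integrable_const _) hbound
      _ = (m Set.univ).toReal * Real.exp ((ε' - M) / t) := by
            rw [integral_const, smul_eq_mul]; rfl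
  -- lower bound on integral
  have hconstB : ∀ y ∈ B, Real.exp (-(M + 2 * ε') / t) ≤ Real.exp (-(gt t y) / t) := by
    intro y hy
    apply Real.exp_le_exp.mpr
    apply div_le_div_of_nonneg_right ?_ ht0.le
    have hgy : g y ≤ M + ε' := by
      have := abs_lt.mp (hr' y hy)
      rw [hM]; linarith [(abs_lt.mp (hr' y hy)).2]
    have := hup y; linarith
  have hIB : Real.exp (-(M + 2 * ε') / t) * (m B).toReal ≤ ∫ y in B, Real.exp (-(gt t y) / t) ∂m :=
    setIntegral_ge_of_const_le_real Metric.isOpen_ball.measurableSet (measure_ne_top m B)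
      hconstB hint.integrableOn
  have hBle : (∫ y in B, Real.exp (-(gt t y) / t) ∂m) ≤ I :=
    setIntegral_le_integral hint (Filter.Eventually.of_forall fun y => (Real.exp_pos _).le)
  have hIlo : Real.exp (-(M + 2 * ε') / t) * (m B).toReal ≤ I := hIB.trans hBle
  have hIpos : 0 < I := lt_of_lt_of_le (by positivity) hIlo
  -- log bounds
  have hlogup : Real.log I ≤ Real.log (m Set.univ).toReal + (ε' - M) / t := by
    calc Real.log I ≤ Real.log ((m Set.univ).toReal * Real.exp ((ε' - M) / t)) :=
          Real.log_le_log hIpos hIle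
      _ = _ := by rw [Real.log_mul hmK.ne' (Real.exp_ne_zero _), Real.log_exp]
  have hloglo : Real.log (m B).toReal + (-(M + 2 * ε')) / t ≤ Real.log I := by
    have : Real.log (Real.exp (-(M + 2 * ε') / t) * (m B).toReal) ≤ Real.log I :=
      Real.log_le_log (by positivity) hIlo
    rwa [Real.log_mul (Real.exp_ne_zero _) hmB.ne', Real.log_exp, add_comm] at this
  -- turn into bounds on t * log I
  have e1 : t * ((ε' - M) / t) = ε' - M := mul_div_cancel₀ _ ht0.ne'
  have e2 : t * ((-(M + 2 * ε')) / t) = -(M + 2 * ε') := mul_div_cancel₀ _ ht0.ne'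
  have h1 : t * Real.log I ≤ t * Real.log (m Set.univ).toReal + (ε' - M) := by
    have := mul_le_mul_of_nonneg_left hlogup ht0.le
    rw [mul_add, e1] at this; linarith
  have h2 : t * Real.log (m B).toReal + (-(M + 2 * ε')) ≤ t * Real.log I := by
    have := mul_le_mul_of_nonneg_left hloglo ht0.le
    rw [mul_add, e2] at this; linarith
  -- smallness of the log-measure terms
  have hs1 : |t * Real.log (m Set.univ).toReal| < ε' := by
    rw [abs_mul, abs_of_pos ht0]; nlinarith
  have hs2 : |t * Real.log (m B).toReal| < ε' := by
    rw [abs_mul, abs_of_pos ht0]; nlinarith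
  have ha1 := abs_lt.mp hs1
  have ha2 := abs_lt.mp hs2
  rw [Real.dist_eq, abs_lt]
  constructor
  · -- -ε < -t * log I - M
    have : M - ε' - t * Real.log (m Set.univ).toReal ≤ -t * Real.log I := by linarith
    have hε4 : ε' = ε / 4 := rfl
    linarith [ha1.2]
  · have : -t * Real.log I ≤ M + 2 * ε' - t * Real.log (m B).toReal := by linarith
    linarith [ha2.1]
end

section
/- Let (K,d) be a nonempty compact metric space and m a finite Borel measure on K such that m(B(y,r)) > 0 for every y ∈ K and r > 0. Let g : K → ℝ be continuous with a unique minimizer y₀ ∈ K (i.e. g(y) > g(y₀) for every y ≠ y₀), and for each t ∈ (0,1] let g_t : K → ℝ be Borel measurable, with sup_{y∈K} |g_t(y) − g(y)| → 0 as t → 0⁺. Then for every continuous v : K → ℝ, lim_{t→0⁺} ( ∫_K v(y)·e^{−g_t(y)/t} dm(y) ) / ( ∫_K e^{−g_t(y)/t} dm(y) ) = v(y₀). -/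
open MeasureTheory

theorem stmt_6 {K : Type*} [MetricSpace K] [CompactSpace K] [Nonempty K]
    [MeasurableSpace K] [BorelSpace K]
    (m : Measure K) [IsFiniteMeasure m]
    (hm : ∀ (y : K) (r : ℝ), 0 < r → 0 < m (Metric.ball y r))
    (g : K → ℝ) (hg : Continuous g)
    (y₀ : K) (hy₀ : ∀ y : K, y ≠ y₀ → g y₀ < g y)
    (gt : ℝ → K → ℝ) (hgt : ∀ t ∈ Set.Ioc (0 : ℝ) 1, Measurable (gt t))
    (hconv : ∀ ε > (0 : ℝ), ∃ δ > (0 : ℝ),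
      ∀ t ∈ Set.Ioc (0 : ℝ) 1, t < δ → ∀ y : K, |gt t y - g y| ≤ ε)
    (v : K → ℝ) (hv : Continuous v) :
    Filter.Tendsto (fun t : ℝ =>
        (∫ y, v y * Real.exp (-(gt t y) / t) ∂m) / (∫ y, Real.exp (-(gt t y) / t) ∂m))
      (nhdsWithin 0 (Set.Ioi 0)) (nhds (v y₀)) := by
  rw [Metric.tendsto_nhds]
  intro ε hε
  -- bound on v
  obtain ⟨C, hC⟩ : ∃ C, ∀ y, |v y| ≤ C := by
    obtain ⟨x, -, hx⟩ := isCompact_univ.exists_isMaxOn Set.univ_nonempty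
      (hv.abs.continuousOn (s := Set.univ))
    exact ⟨|v x|, fun y => hx (Set.mem_univ y)⟩
  have hC0 : 0 ≤ C := le_trans (abs_nonneg _) (hC y₀)
  -- bound on g
  obtain ⟨Cg, hCg⟩ : ∃ Cg, ∀ y, |g y| ≤ Cg := by
    obtain ⟨x, -, hx⟩ := isCompact_univ.exists_isMaxOn Set.univ_nonempty
      (hg.abs.continuousOn (s := Set.univ))
    exact ⟨|g x|, fun y => hx (Set.mem_univ y)⟩
  -- continuity of v at y₀
  obtain ⟨r, hr0, hr⟩ : ∃ r > 0, ∀ y : K, dist y y₀ < r → |v y - v y₀| < ε/2 := by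
    obtain ⟨δ, hδ0, hδ⟩ := Metric.continuous_iff.mp hv y₀ (ε/2) (by linarith)
    exact ⟨δ, hδ0, fun y hy => by simpa [Real.dist_eq] using hδ y hy⟩
  set c := g y₀ with hc
  set S : Set K := (Metric.ball y₀ r)ᶜ with hS
  -- gap on S
  obtain ⟨a, ha0, haS⟩ : ∃ a > (0:ℝ), ∀ y ∈ S, c + a ≤ g y := by
    rcases S.eq_empty_or_nonempty with hSe | hSne
    · exact ⟨1, one_pos, fun y hy => absurd hy (by simp [hSe])⟩
    · have hScl : IsClosed S := Metric.isOpen_ball.isClosed_compl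
      obtain ⟨y₁, hy₁S, hmin⟩ := hScl.isCompact.exists_isMinOn hSne hg.continuousOn
      have hy₁ne : y₁ ≠ y₀ := by
        intro h
        apply hy₁S
        simp [h, Metric.mem_ball, hr0]
      refine ⟨g y₁ - c, by simpa using hy₀ y₁ hy₁ne, fun y hy => ?_⟩
      have := hmin hy
      simp only [Set.mem_setOf_eq] at this
      linarith
  -- small ball where g close to min
  obtain ⟨ρ, hρ0, hρ⟩ : ∃ ρ > 0, ∀ y : K, dist y y₀ < ρ → g y ≤ c + a/4 := by
    obtain ⟨δ, hδ0, hδ⟩ := Metric.continuous_iff.mp hg y₀ (a/4) (by linarith)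
    refine ⟨δ, hδ0, fun y hy => ?_⟩
    have h2 := abs_lt.mp (by simpa [Real.dist_eq] using hδ y hy)
    linarith [h2.2]
  obtain ⟨δ, hδ0, hδ⟩ := hconv (a/8) (by linarith)
  set mB : ℝ := (m (Metric.ball y₀ ρ)).toReal with hmB
  have hmB0 : 0 < mB := ENNReal.toReal_pos (hm y₀ ρ hρ0).ne' (measure_ne_top m _)
  set mU : ℝ := (m Set.univ).toReal with hmU
  have hmU0 : 0 ≤ mU := ENNReal.toReal_nonneg
  set κ : ℝ := 2 * C * mU / mB with hκ
  have hκ0 : 0 ≤ κ := by positivity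
  -- eventual smallness of κ * exp(-(a/2)/t)
  have hexp0 : Filter.Tendsto (fun t : ℝ => κ * Real.exp (-(a/2) / t))
      (nhdsWithin 0 (Set.Ioi 0)) (nhds 0) := by
    have h1 : Filter.Tendsto (fun t : ℝ => -(a/2) / t) (nhdsWithin 0 (Set.Ioi 0))
        Filter.atBot := by
      have h2 : Filter.Tendsto (fun t : ℝ => t⁻¹) (nhdsWithin 0 (Set.Ioi 0))
          Filter.atTop := tendsto_inv_nhdsGT_zero
      have h3 := h2.const_mul_atTop_of_neg (show -(a/2) < 0 by linarith)
      simpa [div_eq_mul_inv] using h3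
    have h4 := (Real.tendsto_exp_atBot.comp h1).const_mul κ
    simpa using h4
  have hev1 : Set.Ioo (0:ℝ) (min δ 1) ∈ nhdsWithin (0:ℝ) (Set.Ioi 0) :=
    Ioo_mem_nhdsGT_of_mem ⟨le_refl 0, lt_min hδ0 one_pos⟩
  have hev2 : ∀ᶠ t in nhdsWithin (0:ℝ) (Set.Ioi 0),
      κ * Real.exp (-(a/2) / t) < ε/2 := hexp0.eventually_lt_const (half_pos hε)
  filter_upwards [hev1, hev2] with t htm hexpt
  obtain ⟨ht0, htδ1⟩ := htm
  have htδ : t < δ := lt_of_lt_of_le htδ1 (min_le_left _ _)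
  have ht1 : t ∈ Set.Ioc (0:ℝ) 1 := ⟨ht0, le_of_lt (lt_of_lt_of_le htδ1 (min_le_right _ _))⟩
  have hgb : ∀ y : K, |gt t y - g y| ≤ a/8 := hδ t ht1 htδ
  set f : K → ℝ := fun y => Real.exp (-(gt t y) / t) with hf
  show dist ((∫ y, v y * f y ∂m) / (∫ y, f y ∂m)) (v y₀) < ε
  have hfpos : ∀ y, 0 < f y := fun y => Real.exp_pos _
  have hfm : Measurable f := Real.measurable_exp.comp (((hgt t ht1).neg).div_const t)
  -- integrability
  have hfint : Integrable f m := by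
    refine Integrable.mono' (integrable_const (Real.exp ((Cg + a/8) / t)))
      hfm.aestronglyMeasurable (ae_of_all _ fun y => ?_)
    rw [Real.norm_eq_abs, abs_of_pos (hfpos y)]
    apply Real.exp_le_exp.mpr
    apply (div_le_div_iff_of_pos_right ht0).mpr
    have h1 := (abs_le.mp (hgb y)).1
    have h2 := (abs_le.mp (hCg y)).1
    linarith
  have hvint : Integrable (fun y => v y * f y) m :=
    hfint.bdd_mul hv.aestronglyMeasurable (ae_of_all _ fun y => by rw [Real.norm_eq_abs]; exact hC y)
  have hwint : Integrable (fun y => (v y - v y₀) * f y) m :=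
    hfint.bdd_mul (hv.sub continuous_const).aestronglyMeasurable
      (ae_of_all _ fun y => by
        rw [Real.norm_eq_abs]
        calc |v y - v y₀| ≤ |v y| + |v y₀| := abs_sub _ _
          _ ≤ C + C := add_le_add (hC y) (hC y₀)
          _ = 2*C := by ring)
  have hfnn : 0 ≤ᵐ[m] f := ae_of_all _ fun y => (hfpos y).le
  set D := ∫ y, f y ∂m with hD
  set E2 := Real.exp (-(c + 3*a/8)/t) with hE2def
  set E1 := Real.exp (-(c + 7*a/8)/t) with hE1def
  have hE2 : 0 < E2 := Real.exp_pos _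
  have hE1 : 0 < E1 := Real.exp_pos _
  -- lower bound on D
  have hDlb : mB * E2 ≤ D := by
    have hflb : ∀ y ∈ Metric.ball y₀ ρ, E2 ≤ f y := by
      intro y hy
      apply Real.exp_le_exp.mpr
      apply (div_le_div_iff_of_pos_right ht0).mpr
      have h1 := (abs_le.mp (hgb y)).2
      have h2 := hρ y (Metric.mem_ball.mp hy)
      linarith
    have h3 : ∫ _ in Metric.ball y₀ ρ, E2 ∂m ≤ ∫ y in Metric.ball y₀ ρ, f y ∂m :=
      setIntegral_mono_on (integrableOn_const (measure_ne_top m _))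
        hfint.integrableOn measurableSet_ball hflb
    have h4 : ∫ _ in Metric.ball y₀ ρ, E2 ∂m = mB * E2 := by
      rw [setIntegral_const, smul_eq_mul]; rfl
    have h5 : ∫ y in Metric.ball y₀ ρ, f y ∂m ≤ D := setIntegral_le_integral hfint hfnn
    linarith
  have hD0 : 0 < D := lt_of_lt_of_le (by positivity) hDlb
  -- bound on outer set integral of f
  have hfub : ∀ y ∈ S, f y ≤ E1 := by
    intro y hy
    apply Real.exp_le_exp.mpr
    apply (div_le_div_iff_of_pos_right ht0).mpr
    have h1 := (abs_le.mp (hgb y)).1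
    have h2 := haS y hy
    linarith
  have hSm : MeasurableSet S := measurableSet_ball.compl
  have hIout : ∫ y in S, f y ∂m ≤ mU * E1 := by
    have h1 : ∫ y in S, f y ∂m ≤ ∫ _ in S, E1 ∂m :=
      setIntegral_mono_on hfint.integrableOn
        (integrableOn_const (measure_ne_top m _)) hSm hfub
    have h2 : ∫ _ in S, (E1:ℝ) ∂m = (m S).toReal * E1 := by
      rw [setIntegral_const, smul_eq_mul]; rfl
    have h3 : (m S).toReal ≤ mU :=
      ENNReal.toReal_mono (measure_ne_top m _) (measure_mono (Set.subset_univ S))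
    calc ∫ y in S, f y ∂m ≤ (m S).toReal * E1 := by rw [← h2]; exact h1
      _ ≤ mU * E1 := mul_le_mul_of_nonneg_right h3 hE1.le
  -- numerator difference
  set N := ∫ y, v y * f y ∂m with hN
  have hNsub : N - v y₀ * D = ∫ y, (v y - v y₀) * f y ∂m := by
    rw [hN, hD, ← integral_const_mul, ← integral_sub hvint ((hfint.const_mul (v y₀)))]
    congr 1
    funext y
    ring
  have hsplit : ∫ y, (v y - v y₀) * f y ∂m
      = (∫ y in Metric.ball y₀ r, (v y - v y₀) * f y ∂m)
        + ∫ y in S, (v y - v y₀) * f y ∂m :=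
    (integral_add_compl measurableSet_ball hwint).symm
  -- inner bound
  have hbin : |∫ y in Metric.ball y₀ r, (v y - v y₀) * f y ∂m| ≤ ε/2 * D := by
    have h1 : |∫ y in Metric.ball y₀ r, (v y - v y₀) * f y ∂m|
        ≤ ∫ y in Metric.ball y₀ r, |(v y - v y₀) * f y| ∂m := by
      have := norm_integral_le_integral_norm (μ := m.restrict (Metric.ball y₀ r))
          (fun y => (v y - v y₀) * f y)
      simp only [Real.norm_eq_abs] at this
      exact this
    have h2 : ∫ y in Metric.ball y₀ r, |(v y - v y₀) * f y| ∂m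
        ≤ ∫ y in Metric.ball y₀ r, (ε/2) * f y ∂m := by
      refine setIntegral_mono_on hwint.abs.integrableOn
        ((hfint.const_mul (ε/2)).integrableOn) measurableSet_ball (fun y hy => ?_)
      rw [abs_mul, abs_of_pos (hfpos y)]
      exact mul_le_mul_of_nonneg_right
        (le_of_lt (hr y (Metric.mem_ball.mp hy))) (hfpos y).le
    have h3 : ∫ y in Metric.ball y₀ r, (ε/2) * f y ∂m
        = (ε/2) * ∫ y in Metric.ball y₀ r, f y ∂m := integral_const_mul _ _
    have h4 : ∫ y in Metric.ball y₀ r, f y ∂m ≤ D := setIntegral_le_integral hfint hfnn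
    have h5 : (ε/2) * ∫ y in Metric.ball y₀ r, f y ∂m ≤ ε/2 * D :=
      mul_le_mul_of_nonneg_left h4 (by linarith)
    linarith
  -- outer bound
  have hbout : |∫ y in S, (v y - v y₀) * f y ∂m| ≤ 2*C*(mU * E1) := by
    have h1 : |∫ y in S, (v y - v y₀) * f y ∂m|
        ≤ ∫ y in S, |(v y - v y₀) * f y| ∂m := by
      have := norm_integral_le_integral_norm (μ := m.restrict S)
          (fun y => (v y - v y₀) * f y)
      simp only [Real.norm_eq_abs] at this
      exact this
    have h2 : ∫ y in S, |(v y - v y₀) * f y| ∂m ≤ ∫ y in S, (2*C) * f y ∂m := by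
      refine setIntegral_mono_on hwint.abs.integrableOn
        ((hfint.const_mul (2*C)).integrableOn) hSm (fun y _ => ?_)
      rw [abs_mul, abs_of_pos (hfpos y)]
      refine mul_le_mul_of_nonneg_right ?_ (hfpos y).le
      calc |v y - v y₀| ≤ |v y| + |v y₀| := abs_sub _ _
        _ ≤ C + C := add_le_add (hC y) (hC y₀)
        _ = 2*C := by ring
    have h3 : ∫ y in S, (2*C) * f y ∂m = (2*C) * ∫ y in S, f y ∂m := integral_const_mul _ _
    have h4 : (2*C) * ∫ y in S, f y ∂m ≤ 2*C*(mU * E1) :=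
      mul_le_mul_of_nonneg_left hIout (by linarith)
    linarith
  -- put it together
  have hE12 : E1 = Real.exp (-(a/2)/t) * E2 := by
    rw [hE1def, hE2def, ← Real.exp_add, ← add_div]
    congr 2
    ring
  have hratio : 2*C*(mU * E1) / D ≤ κ * Real.exp (-(a/2)/t) := by
    have h1 : 2*C*(mU * E1) / D ≤ 2*C*(mU * E1) / (mB * E2) :=
      div_le_div_of_nonneg_left (by positivity) (by positivity) hDlb
    have h2 : 2*C*(mU * E1) / (mB * E2) = κ * Real.exp (-(a/2)/t) := by
      rw [hE12, hκ]
      field_simp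
    linarith
  rw [Real.dist_eq]
  have hkey : |N / D - v y₀| ≤ ε/2 + κ * Real.exp (-(a/2)/t) := by
    have h1 : N / D - v y₀ = (N - v y₀ * D) / D := by field_simp
    rw [h1, abs_div, abs_of_pos hD0, hNsub, hsplit]
    have h2 : |(∫ y in Metric.ball y₀ r, (v y - v y₀) * f y ∂m)
        + ∫ y in S, (v y - v y₀) * f y ∂m| ≤ ε/2 * D + 2*C*(mU * E1) :=
      (abs_add_le _ _).trans (add_le_add hbin hbout)
    have h3 : (ε/2 * D + 2*C*(mU * E1)) / D = ε/2 + 2*C*(mU * E1)/D := by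
      rw [add_div, mul_div_assoc, div_self hD0.ne', mul_one]
    calc |(∫ y in Metric.ball y₀ r, (v y - v y₀) * f y ∂m)
          + ∫ y in S, (v y - v y₀) * f y ∂m| / D
        ≤ (ε/2 * D + 2*C*(mU * E1)) / D := (div_le_div_iff_of_pos_right hD0).mpr h2
      _ = ε/2 + 2*C*(mU * E1)/D := h3
      _ ≤ ε/2 + κ * Real.exp (-(a/2)/t) := by linarith
  linarith
end

section
/- Let (X,d) be a metric space, Y ⊆ X a nonempty compact set, S ⊆ X nonempty, and D := diam(S ∪ Y) < ∞. Let L ≥ 0 and ψ : Y → ℝ be L-Lipschitz. Define ψ̄(y) := sup_{z∈Y}( ψ(z) − L·d(z,y) ) for y ∈ X, Λ := D + L + 1, and ψ_*(y) := ψ̄(y) − Λ·d(y,Y), where d(y,Y) = inf_{z∈Y} d(y,z). Then for every x ∈ S and every y₁ ∈ X with s := d(y₁,Y) > 0, one has d(x,y₁)²/2 − ψ_*(y₁) ≥ inf_{y∈Y}( d(x,y)²/2 − ψ(y) ) + s²/2 + s. -/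
theorem stmt_7 {X : Type*} [MetricSpace X] (S Y : Set X)
    (hS : S.Nonempty) (hY : Y.Nonempty) (hYc : IsCompact Y)
    (hdiam : EMetric.diam (S ∪ Y) ≠ ⊤)
    (L : ℝ) (hL : 0 ≤ L) (ψ : X → ℝ)
    (hψ : ∀ z ∈ Y, ∀ w ∈ Y, |ψ z - ψ w| ≤ L * dist z w) :
    ∀ x ∈ S, ∀ y₁ : X, 0 < Metric.infDist y₁ Y →
      dist x y₁ ^ 2 / 2 -
          (sSup ((fun z => ψ z - L * dist z y₁) '' Y)
            - (Metric.diam (S ∪ Y) + L + 1) * Metric.infDist y₁ Y)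
        ≥ sInf ((fun y => dist x y ^ 2 / 2 - ψ y) '' Y)
            + Metric.infDist y₁ Y ^ 2 / 2 + Metric.infDist y₁ Y := by
  intro x hx y₁ hs
  obtain ⟨y₀, hy₀Y, hy₀⟩ := hYc.exists_infDist_eq_dist hY y₁
  have hb : Bornology.IsBounded (S ∪ Y) := Metric.isBounded_iff_ediam_ne_top.mpr hdiam
  set s := Metric.infDist y₁ Y with hsdef
  set D := Metric.diam (S ∪ Y) with hD
  have hd0D : dist x y₀ ≤ D :=
    Metric.dist_le_diam_of_mem hb (Set.mem_union_left _ hx)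
      (Set.mem_union_right _ hy₀Y)
  -- bound on the sup
  have hsup : sSup ((fun z => ψ z - L * dist z y₁) '' Y) ≤ ψ y₀ + L * s := by
    apply csSup_le (hY.image _)
    rintro a ⟨z, hzY, rfl⟩
    have h1 : ψ z - ψ y₀ ≤ L * dist z y₀ :=
      (abs_le.mp (hψ z hzY y₀ hy₀Y)).2
    have h2 : dist z y₀ ≤ dist z y₁ + dist y₁ y₀ := dist_triangle _ _ _
    have h3 : L * dist z y₀ ≤ L * (dist z y₁ + dist y₁ y₀) :=
      mul_le_mul_of_nonneg_left h2 hL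
    simp only []
    nlinarith [hy₀]
  -- bound on the inf
  have hinf : sInf ((fun y => dist x y ^ 2 / 2 - ψ y) '' Y)
      ≤ dist x y₀ ^ 2 / 2 - ψ y₀ := by
    refine csInf_le ⟨-ψ y₀ - L * D, ?_⟩ ⟨y₀, hy₀Y, rfl⟩
    rintro a ⟨y, hyY, rfl⟩
    have h1 : ψ y - ψ y₀ ≤ L * dist y y₀ := (abs_le.mp (hψ y hyY y₀ hy₀Y)).2
    have h2 : dist y y₀ ≤ D :=
      Metric.dist_le_diam_of_mem hb (Set.mem_union_right _ hyY)
        (Set.mem_union_right _ hy₀Y)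
    have h3 : L * dist y y₀ ≤ L * D := mul_le_mul_of_nonneg_left h2 hL
    have h4 : (0:ℝ) ≤ dist x y ^ 2 / 2 := by positivity
    simp only []
    linarith
  -- geometric inequality
  have hsle : s ≤ dist y₁ y₀ := le_of_eq hy₀
  have ht1 : dist x y₀ - s ≤ dist x y₁ := by
    have := dist_triangle x y₁ y₀
    have := hy₀
    linarith [dist_comm y₁ y₀ ▸ this]
  have ht2 : s - dist x y₀ ≤ dist x y₁ := by
    have h := dist_triangle y₁ x y₀
    have h2 : dist y₁ x = dist x y₁ := dist_comm _ _
    have h3 : dist x y₀ = dist y₀ x := dist_comm _ _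
    nlinarith [hy₀, dist_comm x y₀]
  have hsq : (dist x y₀ - s) ^ 2 ≤ dist x y₁ ^ 2 :=
    sq_le_sq' (by linarith) ht1
  have hds : dist x y₀ * s ≤ D * s :=
    mul_le_mul_of_nonneg_right hd0D hs.le
  nlinarith [hsup, hinf, hsq, hds, hs]
end

section
/- Let a < b be real numbers and let u, v : ℝ → ℝ be convex on [a,b] and differentiable on (a,b), with |u'(s)| ≤ M_u and |v'(s)| ≤ M_v for all s ∈ (a,b), where M_u, M_v ≥ 0. Then ∫_a^b (u'(s) − v'(s))² ds ≤ 8·(M_u + M_v)^{4/3} · ( ∫_a^b (u(s) − v(s))² ds )^{1/3}. -/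
open MeasureTheory

open Set Filter Topology


private lemma aux_deriv_le_slope {a b : ℝ} {f f' : ℝ → ℝ}
    (hf : ConvexOn ℝ (Set.Icc a b) f)
    (hd : ∀ s ∈ Set.Ioo a b, HasDerivAt f (f' s) s)
    {x y : ℝ} (hx : x ∈ Set.Ioo a b) (hy : y ∈ Set.Ioo a b) (hxy : x < y) :
    f' x ≤ (f y - f x) / (y - x) := by
  have hIcc : ∀ z ∈ Set.Ioo a b, z ∈ Set.Icc a b := fun z hz => Set.mem_Icc_of_Ioo hz
  have ht : Tendsto (slope f x) (𝓝[>] x) (𝓝 (f' x)) :=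
    (hasDerivAt_iff_tendsto_slope.1 (hd x hx)).mono_left
      (nhdsWithin_mono x fun z hz => ne_of_gt hz)
  refine le_of_tendsto ht ?_
  filter_upwards [Ioo_mem_nhdsGT_of_mem ⟨le_refl x, hxy⟩] with z hz
  rw [slope_def_field]
  exact hf.secant_mono (hIcc x hx) (hIcc z ⟨hx.1.trans hz.1, hz.2.trans hy.2⟩) (hIcc y hy)
    (ne_of_gt hz.1) (ne_of_gt hxy) hz.2.le

private lemma aux_slope_le_deriv {a b : ℝ} {f f' : ℝ → ℝ}
    (hf : ConvexOn ℝ (Set.Icc a b) f)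
    (hd : ∀ s ∈ Set.Ioo a b, HasDerivAt f (f' s) s)
    {x y : ℝ} (hx : x ∈ Set.Ioo a b) (hy : y ∈ Set.Ioo a b) (hxy : x < y) :
    (f y - f x) / (y - x) ≤ f' y := by
  have hIcc : ∀ z ∈ Set.Ioo a b, z ∈ Set.Icc a b := fun z hz => Set.mem_Icc_of_Ioo hz
  have ht : Tendsto (slope f y) (𝓝[<] y) (𝓝 (f' y)) :=
    (hasDerivAt_iff_tendsto_slope.1 (hd y hy)).mono_left
      (nhdsWithin_mono y fun z hz => ne_of_lt hz)
  refine ge_of_tendsto ht ?_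
  filter_upwards [Ioo_mem_nhdsLT_of_mem ⟨hxy, le_refl y⟩] with z hz
  rw [slope_def_field]
  have h1 := hf.secant_mono (hIcc y hy) (hIcc x hx) (hIcc z ⟨hx.1.trans hz.1, hz.2.trans hy.2⟩)
    (ne_of_lt hxy) (ne_of_lt hz.2) hz.1.le
  calc (f y - f x) / (y - x) = (f x - f y) / (x - y) := by
        rw [show f x - f y = -(f y - f x) by ring, show x - y = -(y - x) by ring, neg_div_neg_eq]
    _ ≤ (f z - f y) / (z - y) := h1

private lemma aux_slope_abs {a b : ℝ} {f f' : ℝ → ℝ} {Mf : ℝ}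
    (hf : ConvexOn ℝ (Set.Icc a b) f)
    (hd : ∀ s ∈ Set.Ioo a b, HasDerivAt f (f' s) s)
    (hM : ∀ s ∈ Set.Ioo a b, |f' s| ≤ Mf)
    {x y : ℝ} (hx : x ∈ Set.Ioo a b) (hy : y ∈ Set.Ioo a b) (hxy : x < y) :
    |f y - f x| ≤ Mf * (y - x) := by
  have h1 : f' x ≤ (f y - f x) / (y - x) := aux_deriv_le_slope hf hd hx hy hxy
  have h2 : (f y - f x) / (y - x) ≤ f' y := aux_slope_le_deriv hf hd hx hy hxy
  have hax := abs_le.1 (hM x hx); have hay := abs_le.1 (hM y hy)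
  have hyx : (0:ℝ) < y - x := by linarith
  have habs : |(f y - f x) / (y - x)| ≤ Mf := abs_le.2 ⟨by linarith [hax.1], by linarith [hay.2]⟩
  calc |f y - f x| = |(f y - f x) / (y - x)| * (y - x) := by
        rw [abs_div, abs_of_pos hyx]; field_simp
    _ ≤ Mf * (y - x) := mul_le_mul_of_nonneg_right habs hyx.le

private lemma aux_integrableOn_deriv {a b : ℝ} {f f' : ℝ → ℝ} {Mf : ℝ}
    (hd : ∀ s ∈ Set.Ioo a b, HasDerivAt f (f' s) s)
    (hM : ∀ s ∈ Set.Ioo a b, |f' s| ≤ Mf) :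
    IntegrableOn f' (Set.Ioo a b) := by
  have hmeas : AEStronglyMeasurable f' (volume.restrict (Set.Ioo a b)) := by
    have h1 : ∀ᵐ s ∂(volume.restrict (Set.Ioo a b)), deriv f s = f' s :=
      (ae_restrict_iff' measurableSet_Ioo).2 (ae_of_all _ fun s hs => (hd s hs).deriv)
    exact (measurable_deriv f).aestronglyMeasurable.congr h1
  refine Integrable.mono' (g := fun _ => Mf) (integrableOn_const measure_Ioo_lt_top.ne)
    hmeas ?_
  exact (ae_restrict_iff' measurableSet_Ioo).2 (ae_of_all _ fun s hs => by
    simpa [Real.norm_eq_abs] using hM s hs)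

private lemma aux_integrableOn_sq {s : Set ℝ} (hs : MeasurableSet s) (hμ : volume s < ⊤)
    {f : ℝ → ℝ} {M : ℝ} (hf : AEStronglyMeasurable f (volume.restrict s))
    (hM : ∀ x ∈ s, |f x| ≤ M) : IntegrableOn (fun x => f x ^ 2) s := by
  refine Integrable.mono' (g := fun _ => M ^ 2) (integrableOn_const hμ.ne)
    (hf.pow 2) ?_
  refine (ae_restrict_iff' hs).2 (ae_of_all _ fun x hx => ?_)
  rw [Real.norm_eq_abs, abs_of_nonneg (sq_nonneg _), ← sq_abs]
  exact pow_le_pow_left₀ (abs_nonneg _) (hM x hx) 2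

private lemma aux_int_linear (p q C r : ℝ) :
    ∫ t in p..q, (C + r * (t - p)) = (q - p) * C + r * ((q - p) ^ 2 / 2) := by
  have h1 : IntervalIntegrable (fun _ : ℝ => C) volume p q := intervalIntegrable_const
  have h2 : IntervalIntegrable (fun t : ℝ => r * (t - p)) volume p q :=
    (Continuous.intervalIntegrable (by continuity) p q)
  rw [intervalIntegral.integral_add h1 h2, intervalIntegral.integral_const,
    intervalIntegral.integral_const_mul]
  have h3 : IntervalIntegrable (fun t : ℝ => t) volume p q :=
    (Continuous.intervalIntegrable (by continuity) p q)
  have h4 : IntervalIntegrable (fun _ : ℝ => p) volume p q := intervalIntegrable_const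
  have hid : ∫ t in p..q, t = (q ^ 2 - p ^ 2) / 2 := by
    open intervalIntegral in exact integral_id
  rw [intervalIntegral.integral_sub h3 h4, hid, intervalIntegral.integral_const]
  simp only [smul_eq_mul]
  ring

private lemma aux_bounded {a b : ℝ} (hab : a < b) {f f' : ℝ → ℝ} {Mf : ℝ}
    (hf : ConvexOn ℝ (Set.Icc a b) f)
    (hd : ∀ s ∈ Set.Ioo a b, HasDerivAt f (f' s) s)
    (hM : ∀ s ∈ Set.Ioo a b, |f' s| ≤ Mf) :
    ∀ s ∈ Set.Ioo a b, |f s| ≤ |f ((a + b) / 2)| + Mf * (b - a) := by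
  intro s hs
  set m := (a + b) / 2 with hm
  have hmm : m ∈ Set.Ioo a b := ⟨by rw [hm]; linarith [hs.1, hs.2], by rw [hm]; linarith⟩
  have hMf0 : 0 ≤ Mf := le_trans (abs_nonneg _) (hM m hmm)
  rcases lt_trichotomy s m with hlt | heq | hgt
  · have h1 : |f m - f s| ≤ Mf * (m - s) := aux_slope_abs hf hd hM hs hmm hlt
    have h2 : Mf * (m - s) ≤ Mf * (b - a) := by
      apply mul_le_mul_of_nonneg_left _ hMf0
      have := hs.1; have := hmm.2; linarith
    have h3 := abs_sub_abs_le_abs_sub (f s) (f m)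
    rw [abs_sub_comm] at h3
    linarith
  · rw [heq]; nlinarith [abs_nonneg (f m)]
  · have h1 : |f s - f m| ≤ Mf * (s - m) := aux_slope_abs hf hd hM hmm hs hgt
    have h2 : Mf * (s - m) ≤ Mf * (b - a) := by
      apply mul_le_mul_of_nonneg_left _ hMf0
      have := hs.2; have := hmm.1; linarith
    have h3 := abs_sub_abs_le_abs_sub (f s) (f m)
    linarith

set_option maxHeartbeats 2000000 in
private lemma key_bound {a b : ℝ} {u v u' v' : ℝ → ℝ} {Mu Mv : ℝ}
    (hMu : 0 ≤ Mu) (hMv : 0 ≤ Mv)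
    (hu : ConvexOn ℝ (Set.Icc a b) u) (hv : ConvexOn ℝ (Set.Icc a b) v)
    (hu' : ∀ s ∈ Set.Ioo a b, HasDerivAt u (u' s) s)
    (hv' : ∀ s ∈ Set.Ioo a b, HasDerivAt v (v' s) s)
    (hMu' : ∀ s ∈ Set.Ioo a b, |u' s| ≤ Mu)
    (hMv' : ∀ s ∈ Set.Ioo a b, |v' s| ≤ Mv)
    {c d h : ℝ} (hac : a < c) (hcd : c < d) (hdb : d < b) (hh : 0 < h) (hhd : h ≤ d - c) :
    ∫ s in Set.Ioo c d, (u' s - v' s) ^ 2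
      ≤ 4 * (∫ s in Set.Ioo a b, (u s - v s) ^ 2) / h ^ 2 + 3 * (Mu + Mv) ^ 2 * h := by
  have hab : a < b := hac.trans (hcd.trans hdb)
  obtain ⟨e, he⟩ : ∃ e : ℝ, e = d - h := ⟨_, rfl⟩
  have hce : c ≤ e := by rw [he]; linarith
  have hed : e < d := by rw [he]; linarith
  have hedle : e ≤ d := hed.le
  have hchd : c + h ≤ d := by linarith
  have hmem : ∀ {t : ℝ}, c ≤ t → t ≤ d → t ∈ Set.Ioo a b := fun h1 h2 =>
    ⟨hac.trans_le h1, lt_of_le_of_lt h2 hdb⟩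
  have habs2 : ∀ x y : ℝ, |x - y| ≤ |x| + |y| := fun x y => by
    calc |x - y| = |x + (-y)| := by ring_nf
      _ ≤ |x| + |-y| := abs_add_le _ _
      _ = |x| + |y| := by rw [abs_neg]
  -- derivative of w
  have hdw : ∀ s ∈ Set.Ioo a b, HasDerivAt (fun t => u t - v t) (u' s - v' s) s :=
    fun s hs => (hu' s hs).sub (hv' s hs)

  obtain ⟨M, hMdef⟩ : ∃ M : ℝ, M = Mu + Mv := ⟨_, rfl⟩
  rw [← hMdef]
  have hM0 : 0 ≤ M := by rw [hMdef]; positivity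
  have hdwM : ∀ s ∈ Set.Ioo a b, |u' s - v' s| ≤ M := fun s hs => by
    rw [hMdef]; exact (habs2 _ _).trans (add_le_add (hMu' s hs) (hMv' s hs))
  -- integrability
  have hu'int : IntegrableOn u' (Set.Ioo a b) := aux_integrableOn_deriv hu' hMu'
  have hv'int : IntegrableOn v' (Set.Ioo a b) := aux_integrableOn_deriv hv' hMv'
  have hdwint : IntegrableOn (fun s => u' s - v' s) (Set.Ioo a b) :=
    aux_integrableOn_deriv hdw hdwM
  have hdw2int : IntegrableOn (fun s => (u' s - v' s) ^ 2) (Set.Ioo a b) :=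
    aux_integrableOn_sq measurableSet_Ioo measure_Ioo_lt_top hdwint.aestronglyMeasurable hdwM
  have hucont : ContinuousOn u (Set.Ioo a b) :=
    fun s hs => ((hu' s hs).continuousAt).continuousWithinAt
  have hvcont : ContinuousOn v (Set.Ioo a b) :=
    fun s hs => ((hv' s hs).continuousAt).continuousWithinAt
  have hubd := aux_bounded hab hu hu' hMu'
  have hvbd := aux_bounded hab hv hv' hMv'
  have huint : IntegrableOn u (Set.Ioo a b) := by
    refine Integrable.mono' (g := fun _ => |u ((a + b) / 2)| + Mu * (b - a))
      (integrableOn_const measure_Ioo_lt_top.ne)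
      (hucont.aestronglyMeasurable measurableSet_Ioo) ?_
    exact (ae_restrict_iff' measurableSet_Ioo).2 (ae_of_all _ fun s hs => by
      simpa [Real.norm_eq_abs] using hubd s hs)
  have hvint : IntegrableOn v (Set.Ioo a b) := by
    refine Integrable.mono' (g := fun _ => |v ((a + b) / 2)| + Mv * (b - a))
      (integrableOn_const measure_Ioo_lt_top.ne)
      (hvcont.aestronglyMeasurable measurableSet_Ioo) ?_
    exact (ae_restrict_iff' measurableSet_Ioo).2 (ae_of_all _ fun s hs => by
      simpa [Real.norm_eq_abs] using hvbd s hs)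
  have hw2int : IntegrableOn (fun s => (u s - v s) ^ 2) (Set.Ioo a b) := by
    refine aux_integrableOn_sq (M := |u ((a + b) / 2)| + Mu * (b - a) + (|v ((a + b) / 2)| + Mv * (b - a))) measurableSet_Ioo measure_Ioo_lt_top
      ((hucont.sub hvcont).aestronglyMeasurable measurableSet_Ioo) (fun s hs => ?_)
    exact (habs2 _ _).trans (add_le_add (hubd s hs) (hvbd s hs))
  -- interval integrability helper
  have hII : ∀ {f : ℝ → ℝ}, IntegrableOn f (Set.Ioo a b) → ∀ {x y : ℝ},
      c ≤ x → x ≤ d → c ≤ y → y ≤ d → IntervalIntegrable f volume x y := by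
    intro f hf x y hcx hxd hcy hyd
    rw [intervalIntegrable_iff]
    refine hf.mono_set fun t ht => ?_
    rcases Set.mem_uIoc.1 ht with ⟨h1, h2⟩ | ⟨h1, h2⟩
    · exact ⟨hac.trans_le (hcx.trans h1.le), lt_of_le_of_lt (h2.trans hyd) hdb⟩
    · exact ⟨hac.trans_le (hcy.trans h1.le), lt_of_le_of_lt (h2.trans hxd) hdb⟩
  -- set integral domination
  have hQb : ∀ {x y : ℝ}, a < x → x ≤ y → y < b →
      ∫ s in x..y, (u s - v s) ^ 2 ≤ ∫ s in Set.Ioo a b, (u s - v s) ^ 2 := by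
    intro x y h1 h2 h3

    rw [intervalIntegral.integral_of_le h2]
    refine setIntegral_mono_set hw2int (ae_of_all _ fun s => sq_nonneg _) ?_
    exact HasSubset.Subset.eventuallyLE (fun t ht => ⟨h1.trans ht.1, lt_of_le_of_lt ht.2 h3⟩)
  obtain ⟨Q, hQdef⟩ : ∃ Q : ℝ, Q = ∫ s in Set.Ioo a b, (u s - v s) ^ 2 := ⟨_, rfl⟩
  rw [← hQdef]
  -- convert goal to interval integral
  have hconv : ∫ s in Set.Ioo c d, (u' s - v' s) ^ 2 = ∫ s in c..d, (u' s - v' s) ^ 2 := by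
    rw [intervalIntegral.integral_of_le hcd.le, integral_Ioc_eq_integral_Ioo]
  rw [hconv]
  have hsplit : (∫ s in c..e, (u' s - v' s) ^ 2) + ∫ s in e..d, (u' s - v' s) ^ 2
      = ∫ s in c..d, (u' s - v' s) ^ 2 :=
    intervalIntegral.integral_add_adjacent_intervals
      (hII hdw2int le_rfl hcd.le hce hedle) (hII hdw2int hce hedle hcd.le le_rfl)
  have htail : ∫ s in e..d, (u' s - v' s) ^ 2 ≤ M ^ 2 * h := by
    have h1 : ∫ s in e..d, (u' s - v' s) ^ 2 ≤ ∫ _s in e..d, M ^ 2 := by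
      refine intervalIntegral.integral_mono_on hedle
        (hII hdw2int hce hedle hcd.le le_rfl) intervalIntegrable_const (fun s hs => ?_)
      have hsm : s ∈ Set.Ioo a b := hmem (hce.trans hs.1) hs.2
      have h2 := abs_le.1 (hdwM s hsm)
      exact sq_le_sq' h2.1 h2.2
    rw [intervalIntegral.integral_const, smul_eq_mul] at h1
    have : d - e = h := by rw [he]; ring
    rw [this] at h1
    linarith
  -- pointwise membership
  have hpt : ∀ s ∈ Set.Icc c e, s ∈ Set.Ioo a b ∧ s + h ∈ Set.Ioo a b := fun s hs =>
    ⟨hmem hs.1 (hs.2.trans hedle), hmem (by linarith [hs.1]) (by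
      have := hs.2; rw [he] at this; linarith)⟩
  obtain ⟨A, hA⟩ : ∃ A : ℝ → ℝ, A = fun s : ℝ => (u (s + h) - u s) / h - u' s := ⟨_, rfl⟩
  obtain ⟨B, hB⟩ : ∃ B : ℝ → ℝ, B = fun s : ℝ => (v (s + h) - v s) / h - v' s := ⟨_, rfl⟩
  obtain ⟨g, hg⟩ : ∃ g : ℝ → ℝ, g = fun s : ℝ => (u (s + h) - v (s + h) - (u s - v s)) / h := ⟨_, rfl⟩
  have hA0 : ∀ s ∈ Set.Icc c e, 0 ≤ A s := by
    intro s hs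
    obtain ⟨h1, h2⟩ := hpt s hs
    have h3 := aux_deriv_le_slope hu hu' h1 h2 (by linarith)
    rw [add_sub_cancel_left] at h3
    rw [hA]; dsimp only
    linarith
  have hB0 : ∀ s ∈ Set.Icc c e, 0 ≤ B s := by
    intro s hs
    obtain ⟨h1, h2⟩ := hpt s hs
    have h3 := aux_deriv_le_slope hv hv' h1 h2 (by linarith)
    rw [add_sub_cancel_left] at h3
    rw [hB]; dsimp only
    linarith
  have hgA : ∀ s ∈ Set.Icc c e, |u' s - v' s - g s| ≤ A s + B s := by
    intro s hs
    have hid : u' s - v' s - g s = -(A s) + B s := by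
      rw [hA, hB, hg]; dsimp only
      field_simp
      ring
    rw [hid, abs_le]
    have h1 := hA0 s hs; have h2 := hB0 s hs
    constructor <;> linarith
  have hkey_pt : ∀ s ∈ Set.Icc c e, (u' s - v' s) ^ 2
      ≤ (1/2) * (u' s - v' s) ^ 2 + (1/2) * (g s) ^ 2 + M * (A s + B s) := by
    intro s hs
    have hsm := (hpt s hs).1
    have h1 := hdwM s hsm
    have h2 := hgA s hs
    have h3 : (u' s - v' s) * (u' s - v' s - g s) ≤ M * (A s + B s) :=
      calc (u' s - v' s) * (u' s - v' s - g s)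
          ≤ |(u' s - v' s) * (u' s - v' s - g s)| := le_abs_self _
        _ = |u' s - v' s| * |u' s - v' s - g s| := abs_mul _ _
        _ ≤ M * (A s + B s) := mul_le_mul h1 h2 (abs_nonneg _) hM0
    have h4 : (u' s - v' s) * g s ≤ (1/2) * (u' s - v' s) ^ 2 + (1/2) * (g s) ^ 2 := by
      nlinarith [sq_nonneg (u' s - v' s - g s)]
    have h5 : (u' s - v' s) ^ 2
        = (u' s - v' s) * g s + (u' s - v' s) * (u' s - v' s - g s) := by ring
    linarith

  -- continuity of shifted functions
  have hsubIcc : Set.Icc c e ⊆ Set.Ioo a b := fun t ht => (hpt t ht).1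
  have hshiftu : ContinuousOn (fun s : ℝ => u (s + h)) (Set.Icc c e) := by
    intro s hs
    have h1 : ContinuousAt (fun x : ℝ => u (x + h)) s :=
      ContinuousAt.comp (f := fun x : ℝ => x + h) ((hu' _ (hpt s hs).2).continuousAt)
        ((continuous_add_right h).continuousAt)
    exact h1.continuousWithinAt
  have hshiftv : ContinuousOn (fun s : ℝ => v (s + h)) (Set.Icc c e) := by
    intro s hs
    have h1 : ContinuousAt (fun x : ℝ => v (x + h)) s :=
      ContinuousAt.comp (f := fun x : ℝ => x + h) ((hv' _ (hpt s hs).2).continuousAt)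
        ((continuous_add_right h).continuousAt)
    exact h1.continuousWithinAt
  have hgcont : ContinuousOn g (Set.Icc c e) := by
    rw [hg]
    exact ((hshiftu.sub hshiftv).sub ((hucont.sub hvcont).mono hsubIcc)).div_const h
  have hg2II : IntervalIntegrable (fun s => g s ^ 2) volume c e := by
    apply ContinuousOn.intervalIntegrable
    rw [Set.uIcc_of_le hce]
    exact hgcont.pow 2
  have huhII : IntervalIntegrable (fun s => (u (s + h) - u s) / h) volume c e := by
    apply ContinuousOn.intervalIntegrable
    rw [Set.uIcc_of_le hce]
    exact (hshiftu.sub (hucont.mono hsubIcc)).div_const h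
  have hvhII : IntervalIntegrable (fun s => (v (s + h) - v s) / h) volume c e := by
    apply ContinuousOn.intervalIntegrable
    rw [Set.uIcc_of_le hce]
    exact (hshiftv.sub (hvcont.mono hsubIcc)).div_const h
  have hAII : IntervalIntegrable A volume c e := by
    rw [hA]; exact huhII.sub (hII hu'int le_rfl hcd.le hce hedle)
  have hBII : IntervalIntegrable B volume c e := by
    rw [hB]; exact hvhII.sub (hII hv'int le_rfl hcd.le hce hedle)
  have hdw2IIce : IntervalIntegrable (fun s => (u' s - v' s) ^ 2) volume c e :=
    hII hdw2int le_rfl hcd.le hce hedle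
  have hmain1 : ∫ s in c..e, (u' s - v' s) ^ 2
      ≤ ∫ s in c..e, ((1/2) * (u' s - v' s) ^ 2 + (1/2) * (g s) ^ 2 + M * (A s + B s)) :=
    intervalIntegral.integral_mono_on hce hdw2IIce
      (((hdw2IIce.const_mul _).add (hg2II.const_mul _)).add ((hAII.add hBII).const_mul _))
      hkey_pt
  have hmain2 : ∫ s in c..e, ((1/2) * (u' s - v' s) ^ 2 + (1/2) * (g s) ^ 2 + M * (A s + B s))
      = (1/2) * (∫ s in c..e, (u' s - v' s) ^ 2) + (1/2) * (∫ s in c..e, (g s) ^ 2)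
        + M * ((∫ s in c..e, A s) + ∫ s in c..e, B s) := by
    rw [intervalIntegral.integral_add ((hdw2IIce.const_mul _).add (hg2II.const_mul _))
        ((hAII.add hBII).const_mul _),
      intervalIntegral.integral_add (hdw2IIce.const_mul _) (hg2II.const_mul _),
      intervalIntegral.integral_const_mul, intervalIntegral.integral_const_mul,
      intervalIntegral.integral_const_mul, intervalIntegral.integral_add hAII hBII]
  have hehd : e + h = d := by rw [he]; ring
  -- bound on the integral of g^2
  have hx2II : IntervalIntegrable (fun s => (u (s + h) - v (s + h)) ^ 2) volume c e := by
    apply ContinuousOn.intervalIntegrable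
    rw [Set.uIcc_of_le hce]
    exact (hshiftu.sub hshiftv).pow 2
  have hy2II : IntervalIntegrable (fun s => (u s - v s) ^ 2) volume c e :=
    hII hw2int le_rfl hcd.le hce hedle
  have hgb : ∫ s in c..e, (g s) ^ 2 ≤ 4 * Q / h ^ 2 := by
    have hh2 : (0:ℝ) < h ^ 2 := by positivity
    have hp : ∀ s ∈ Set.Icc c e,
        (g s) ^ 2 ≤ (2 * (u (s + h) - v (s + h)) ^ 2 + 2 * (u s - v s) ^ 2) / h ^ 2 := by
      intro s hs
      rw [hg]; dsimp only
      rw [div_pow]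
      gcongr
      nlinarith [sq_nonneg (u (s + h) - v (s + h) + (u s - v s))]
    have h1 : ∫ s in c..e, (g s) ^ 2
        ≤ ∫ s in c..e, (2 * (u (s + h) - v (s + h)) ^ 2 + 2 * (u s - v s) ^ 2) / h ^ 2 :=
      intervalIntegral.integral_mono_on hce hg2II
        (((hx2II.const_mul _).add (hy2II.const_mul _)).div_const _) hp
    have h2 : ∫ s in c..e, (2 * (u (s + h) - v (s + h)) ^ 2 + 2 * (u s - v s) ^ 2) / h ^ 2
        = (2 * (∫ s in c..e, (u (s + h) - v (s + h)) ^ 2)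
           + 2 * (∫ s in c..e, (u s - v s) ^ 2)) / h ^ 2 := by
      rw [intervalIntegral.integral_div,
        intervalIntegral.integral_add (hx2II.const_mul _) (hy2II.const_mul _),
        intervalIntegral.integral_const_mul, intervalIntegral.integral_const_mul]
    have h3 : ∫ s in c..e, (u (s + h) - v (s + h)) ^ 2 = ∫ t in (c+h)..(e+h), (u t - v t) ^ 2 :=
      intervalIntegral.integral_comp_add_right (fun t => (u t - v t) ^ 2) h
    have h4 : ∫ s in c..e, (u (s + h) - v (s + h)) ^ 2 ≤ Q := by
      rw [h3, hehd, hQdef]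
      exact hQb (by linarith) (by linarith) hdb
    have h5 : ∫ s in c..e, (u s - v s) ^ 2 ≤ Q := by
      rw [hQdef]
      exact hQb hac hce (lt_of_le_of_lt hedle hdb)
    calc ∫ s in c..e, (g s) ^ 2
        ≤ (2 * (∫ s in c..e, (u (s + h) - v (s + h)) ^ 2)
           + 2 * (∫ s in c..e, (u s - v s) ^ 2)) / h ^ 2 := by rw [← h2]; exact h1
      _ ≤ (2 * Q + 2 * Q) / h ^ 2 := by gcongr
      _ = 4 * Q / h ^ 2 := by ring

  -- bound on the integral of A
  have hshiftuII : IntervalIntegrable (fun s => u (s + h)) volume c e := by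
    apply ContinuousOn.intervalIntegrable
    rw [Set.uIcc_of_le hce]
    exact hshiftu
  have hshiftvII : IntervalIntegrable (fun s => v (s + h)) volume c e := by
    apply ContinuousOn.intervalIntegrable
    rw [Set.uIcc_of_le hce]
    exact hshiftv
  have huIIce : IntervalIntegrable u volume c e := hII huint le_rfl hcd.le hce hedle
  have hvIIce : IntervalIntegrable v volume c e := hII hvint le_rfl hcd.le hce hedle
  have hAbound : ∫ s in c..e, A s ≤ Mu * h := by
    have hu'IIce : IntervalIntegrable u' volume c e := hII hu'int le_rfl hcd.le hce hedle
    have hsplitA : ∫ s in c..e, A s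
        = (∫ s in c..e, (u (s + h) - u s) / h) - ∫ s in c..e, u' s := by
      rw [hA]; exact intervalIntegral.integral_sub huhII hu'IIce
    have hftc : ∫ s in c..e, u' s = u e - u c :=
      intervalIntegral.integral_eq_sub_of_hasDerivAt (fun t ht => by
        rw [Set.uIcc_of_le hce] at ht
        exact hu' t (hmem ht.1 (ht.2.trans hedle))) hu'IIce
    have hshiftint : ∫ s in c..e, u (s + h) = ∫ t in (c+h)..d, u t := by
      rw [intervalIntegral.integral_comp_add_right u h, hehd]
    have hquot : ∫ s in c..e, (u (s + h) - u s) / h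
        = ((∫ t in (c+h)..d, u t) - ∫ s in c..e, u s) / h := by
      rw [intervalIntegral.integral_div, intervalIntegral.integral_sub hshiftuII huIIce,
        hshiftint]
    have hch1 : (∫ t in (c+h)..e, u t) + ∫ t in e..d, u t = ∫ t in (c+h)..d, u t :=
      intervalIntegral.integral_add_adjacent_intervals
        (hII huint (by linarith) hchd hce hedle) (hII huint hce hedle hcd.le le_rfl)
    have hch2 : (∫ t in c..(c+h), u t) + ∫ t in (c+h)..e, u t = ∫ t in c..e, u t :=
      intervalIntegral.integral_add_adjacent_intervals
        (hII huint le_rfl hcd.le (by linarith) hchd) (hII huint (by linarith) hchd hce hedle)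
    have hP : ∫ t in e..d, u t ≤ u e * h + Mu * (h ^ 2 / 2) := by
      have h1 : ∫ t in e..d, u t ≤ ∫ t in e..d, (u e + Mu * (t - e)) := by
        refine intervalIntegral.integral_mono_on hedle (hII huint hce hedle hcd.le le_rfl)
          (Continuous.intervalIntegrable
            (continuous_const.add (continuous_const.mul (continuous_id.sub continuous_const)))
            _ _) (fun t ht => ?_)
        rcases eq_or_lt_of_le ht.1 with heq | hlt
        · rw [← heq]; simp
        · have hts : t ∈ Set.Ioo a b := hmem (hce.trans ht.1) ht.2
          have hes : e ∈ Set.Ioo a b := hmem hce hedle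
          have h2 := aux_slope_abs hu hu' hMu' hes hts hlt
          have h3 : u t - u e ≤ Mu * (t - e) := le_trans (le_abs_self _) h2
          linarith
      rw [aux_int_linear e d (u e) Mu] at h1
      have hde : d - e = h := by rw [he]; ring
      rw [hde] at h1
      linarith [h1]
    have hR : u c * h - Mu * (h ^ 2 / 2) ≤ ∫ t in c..(c+h), u t := by
      have h1 : ∫ t in c..(c+h), (u c + (-Mu) * (t - c)) ≤ ∫ t in c..(c+h), u t := by
        refine intervalIntegral.integral_mono_on (by linarith)
          (Continuous.intervalIntegrable
            (continuous_const.add (continuous_const.mul (continuous_id.sub continuous_const)))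
            _ _)
          (hII huint le_rfl hcd.le (by linarith) hchd) (fun t ht => ?_)
        rcases eq_or_lt_of_le ht.1 with heq | hlt
        · rw [← heq]; simp
        · have hts : t ∈ Set.Ioo a b := hmem hlt.le (ht.2.trans hchd)
          have hcs : c ∈ Set.Ioo a b := hmem le_rfl hcd.le
          have h2 := aux_slope_abs hu hu' hMu' hcs hts hlt
          have h3 : -(Mu * (t - c)) ≤ u t - u c := (abs_le.1 h2).1
          linarith
      rw [aux_int_linear c (c + h) (u c) (-Mu)] at h1
      have hch : c + h - c = h := by ring
      rw [hch] at h1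
      linarith [h1]
    rw [hsplitA, hftc, hquot, sub_le_iff_le_add, div_le_iff₀ hh]
    nlinarith [hch1, hch2, hP, hR]

  have hBbound : ∫ s in c..e, B s ≤ Mv * h := by
    have hv'IIce : IntervalIntegrable v' volume c e := hII hv'int le_rfl hcd.le hce hedle
    have hsplitB : ∫ s in c..e, B s
        = (∫ s in c..e, (v (s + h) - v s) / h) - ∫ s in c..e, v' s := by
      rw [hB]; exact intervalIntegral.integral_sub hvhII hv'IIce
    have hftc : ∫ s in c..e, v' s = v e - v c :=
      intervalIntegral.integral_eq_sub_of_hasDerivAt (fun t ht => by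
        rw [Set.uIcc_of_le hce] at ht
        exact hv' t (hmem ht.1 (ht.2.trans hedle))) hv'IIce
    have hshiftint : ∫ s in c..e, v (s + h) = ∫ t in (c+h)..d, v t := by
      rw [intervalIntegral.integral_comp_add_right v h, hehd]
    have hquot : ∫ s in c..e, (v (s + h) - v s) / h
        = ((∫ t in (c+h)..d, v t) - ∫ s in c..e, v s) / h := by
      rw [intervalIntegral.integral_div, intervalIntegral.integral_sub hshiftvII hvIIce,
        hshiftint]
    have hch1 : (∫ t in (c+h)..e, v t) + ∫ t in e..d, v t = ∫ t in (c+h)..d, v t :=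
      intervalIntegral.integral_add_adjacent_intervals
        (hII hvint (by linarith) hchd hce hedle) (hII hvint hce hedle hcd.le le_rfl)
    have hch2 : (∫ t in c..(c+h), v t) + ∫ t in (c+h)..e, v t = ∫ t in c..e, v t :=
      intervalIntegral.integral_add_adjacent_intervals
        (hII hvint le_rfl hcd.le (by linarith) hchd) (hII hvint (by linarith) hchd hce hedle)
    have hP : ∫ t in e..d, v t ≤ v e * h + Mv * (h ^ 2 / 2) := by
      have h1 : ∫ t in e..d, v t ≤ ∫ t in e..d, (v e + Mv * (t - e)) := by
        refine intervalIntegral.integral_mono_on hedle (hII hvint hce hedle hcd.le le_rfl)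
          (Continuous.intervalIntegrable
            (continuous_const.add (continuous_const.mul (continuous_id.sub continuous_const)))
            _ _) (fun t ht => ?_)
        rcases eq_or_lt_of_le ht.1 with heq | hlt
        · rw [← heq]; simp
        · have hts : t ∈ Set.Ioo a b := hmem (hce.trans ht.1) ht.2
          have hes : e ∈ Set.Ioo a b := hmem hce hedle
          have h2 := aux_slope_abs hv hv' hMv' hes hts hlt
          have h3 : v t - v e ≤ Mv * (t - e) := le_trans (le_abs_self _) h2
          linarith
      rw [aux_int_linear e d (v e) Mv] at h1
      have hde : d - e = h := by rw [he]; ring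
      rw [hde] at h1
      linarith [h1]
    have hR : v c * h - Mv * (h ^ 2 / 2) ≤ ∫ t in c..(c+h), v t := by
      have h1 : ∫ t in c..(c+h), (v c + (-Mv) * (t - c)) ≤ ∫ t in c..(c+h), v t := by
        refine intervalIntegral.integral_mono_on (by linarith)
          (Continuous.intervalIntegrable
            (continuous_const.add (continuous_const.mul (continuous_id.sub continuous_const)))
            _ _)
          (hII hvint le_rfl hcd.le (by linarith) hchd) (fun t ht => ?_)
        rcases eq_or_lt_of_le ht.1 with heq | hlt
        · rw [← heq]; simp
        · have hts : t ∈ Set.Ioo a b := hmem hlt.le (ht.2.trans hchd)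
          have hcs : c ∈ Set.Ioo a b := hmem le_rfl hcd.le
          have h2 := aux_slope_abs hv hv' hMv' hcs hts hlt
          have h3 : -(Mv * (t - c)) ≤ v t - v c := (abs_le.1 h2).1
          linarith
      rw [aux_int_linear c (c + h) (v c) (-Mv)] at h1
      have hch : c + h - c = h := by ring
      rw [hch] at h1
      linarith [h1]
    rw [hsplitB, hftc, hquot, sub_le_iff_le_add, div_le_iff₀ hh]
    nlinarith [hch1, hch2, hP, hR]
  -- final assembly
  have hIbound : ∫ s in c..e, (u' s - v' s) ^ 2 ≤ 4 * Q / h ^ 2 + 2 * M ^ 2 * h := by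
    have h6 : M * ((∫ s in c..e, A s) + ∫ s in c..e, B s) ≤ M * (Mu * h + Mv * h) :=
      mul_le_mul_of_nonneg_left (add_le_add hAbound hBbound) hM0
    have h7 : M * (Mu * h + Mv * h) = M ^ 2 * h := by rw [hMdef]; ring
    have h8 := hmain1.trans_eq hmain2
    linarith [hgb]
  rw [← hsplit]
  linarith [htail, hIbound]




private lemma aux_final_calc {M Q : ℝ} (hM : 0 < M) (hQ : 0 < Q) :
    4 * Q / (Q ^ ((1:ℝ)/3) * (M ^ ((2:ℝ)/3))⁻¹) ^ 2
        + 3 * M ^ 2 * (Q ^ ((1:ℝ)/3) * (M ^ ((2:ℝ)/3))⁻¹)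
      = 7 * M ^ ((4:ℝ)/3) * Q ^ ((1:ℝ)/3) ∧
    M ^ 2 * (Q ^ ((1:ℝ)/3) * (M ^ ((2:ℝ)/3))⁻¹) = M ^ ((4:ℝ)/3) * Q ^ ((1:ℝ)/3) := by
  obtain ⟨p, hp0, hpQ⟩ : ∃ p : ℝ, 0 < p ∧ Q ^ ((1:ℝ)/3) = p :=
    ⟨_, Real.rpow_pos_of_pos hQ _, rfl⟩
  obtain ⟨q, hq0, hqM⟩ : ∃ q : ℝ, 0 < q ∧ M ^ ((1:ℝ)/3) = q :=
    ⟨_, Real.rpow_pos_of_pos hM _, rfl⟩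
  have hp3 : p ^ 3 = Q := by
    rw [← hpQ, ← Real.rpow_natCast (Q ^ ((1:ℝ)/3)) 3, ← Real.rpow_mul hQ.le]; norm_num
  have hq3 : q ^ 3 = M := by
    rw [← hqM, ← Real.rpow_natCast (M ^ ((1:ℝ)/3)) 3, ← Real.rpow_mul hM.le]; norm_num
  have h23 : M ^ ((2:ℝ)/3) = q ^ 2 := by
    rw [← hqM, ← Real.rpow_natCast (M ^ ((1:ℝ)/3)) 2, ← Real.rpow_mul hM.le]; norm_num
  have h43 : M ^ ((4:ℝ)/3) = q ^ 4 := by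
    rw [← hqM, ← Real.rpow_natCast (M ^ ((1:ℝ)/3)) 4, ← Real.rpow_mul hM.le]; norm_num
  rw [hpQ, h23, h43, ← hp3, ← hq3]
  constructor
  · field_simp
    ring
  · field_simp

theorem stmt_12 (a b : ℝ) (hab : a < b) (u v u' v' : ℝ → ℝ)
    (Mu Mv : ℝ) (hMu : 0 ≤ Mu) (hMv : 0 ≤ Mv)
    (hu : ConvexOn ℝ (Set.Icc a b) u) (hv : ConvexOn ℝ (Set.Icc a b) v)
    (hu' : ∀ s ∈ Set.Ioo a b, HasDerivAt u (u' s) s)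
    (hv' : ∀ s ∈ Set.Ioo a b, HasDerivAt v (v' s) s)
    (hMu' : ∀ s ∈ Set.Ioo a b, |u' s| ≤ Mu)
    (hMv' : ∀ s ∈ Set.Ioo a b, |v' s| ≤ Mv) :
    ∫ s in Set.Ioo a b, (u' s - v' s) ^ 2
      ≤ 8 * (Mu + Mv) ^ ((4 : ℝ) / 3) * (∫ s in Set.Ioo a b, (u s - v s) ^ 2) ^ ((1 : ℝ) / 3) := by
  have habs2 : ∀ x y : ℝ, |x - y| ≤ |x| + |y| := fun x y => by
    calc |x - y| = |x + (-y)| := by ring_nf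
      _ ≤ |x| + |-y| := abs_add_le _ _
      _ = |x| + |y| := by rw [abs_neg]
  have hQ0 : 0 ≤ ∫ s in Set.Ioo a b, (u s - v s) ^ 2 :=
    setIntegral_nonneg measurableSet_Ioo fun s _ => sq_nonneg _
  have hRHS0 : 0 ≤ 8 * (Mu + Mv) ^ ((4 : ℝ) / 3)
      * (∫ s in Set.Ioo a b, (u s - v s) ^ 2) ^ ((1 : ℝ) / 3) :=
    mul_nonneg (mul_nonneg (by norm_num) (Real.rpow_nonneg (by linarith) _))
      (Real.rpow_nonneg hQ0 _)
  have hdw : ∀ s ∈ Set.Ioo a b, HasDerivAt (fun t => u t - v t) (u' s - v' s) s :=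
    fun s hs => (hu' s hs).sub (hv' s hs)
  have hdwM : ∀ s ∈ Set.Ioo a b, |u' s - v' s| ≤ Mu + Mv := fun s hs =>
    (habs2 _ _).trans (add_le_add (hMu' s hs) (hMv' s hs))
  have hdwint : IntegrableOn (fun s => u' s - v' s) (Set.Ioo a b) :=
    aux_integrableOn_deriv hdw hdwM
  have hdw2int : IntegrableOn (fun s => (u' s - v' s) ^ 2) (Set.Ioo a b) :=
    aux_integrableOn_sq measurableSet_Ioo measure_Ioo_lt_top hdwint.aestronglyMeasurable hdwM
  -- the exhausting sequence of intervals
  have hba : (0:ℝ) < b - a := by linarith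
  obtain ⟨S, hS⟩ : ∃ S : ℕ → Set ℝ,
      S = fun n : ℕ => Set.Ioo (a + (b-a)/((n:ℝ)+3)) (b - (b-a)/((n:ℝ)+3)) := ⟨_, rfl⟩
  have hεpos : ∀ n : ℕ, 0 < (b-a)/((n:ℝ)+3) := fun n => by positivity
  have hεlt : ∀ n : ℕ, (b-a)/((n:ℝ)+3) < (b-a)/2 := fun n =>
    div_lt_div_of_pos_left hba (by norm_num) (by
      have : (0:ℝ) ≤ (n:ℝ) := Nat.cast_nonneg n
      linarith)
  have hSmono : Monotone S := by
    intro m n hmn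
    rw [hS]
    have hc : (b-a)/((n:ℝ)+3) ≤ (b-a)/((m:ℝ)+3) := by
      have h1 : ((m:ℝ)+3) ≤ ((n:ℝ)+3) := by
        have h2 : (m:ℝ) ≤ (n:ℝ) := Nat.cast_le.2 hmn
        linarith
      gcongr
    exact Set.Ioo_subset_Ioo (by linarith) (by linarith)
  have hSsub : ∀ n, S n ⊆ Set.Ioo a b := by
    intro n t ht
    simp only [hS, Set.mem_Ioo] at ht
    rw [Set.mem_Ioo]
    exact ⟨by linarith [hεpos n, ht.1], by linarith [hεpos n, ht.2]⟩
  have hUnion : ⋃ n, S n = Set.Ioo a b := by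
    apply Set.Subset.antisymm (Set.iUnion_subset hSsub)
    intro x hx
    have hm : 0 < min (x - a) (b - x) := lt_min (by linarith [hx.1]) (by linarith [hx.2])
    obtain ⟨n, hn⟩ := exists_nat_gt ((b-a)/min (x-a) (b-x))
    have h1 : (b-a)/((n:ℝ)+3) < min (x-a) (b-x) := by
      rw [div_lt_iff₀ (by positivity)]
      have h2 : b - a < (n:ℝ) * min (x-a) (b-x) := by
        rw [div_lt_iff₀ hm] at hn
        exact hn
      nlinarith [hm]
    refine Set.mem_iUnion.2 ⟨n, ?_⟩
    rw [hS]
    constructor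
    · have := lt_of_lt_of_le h1 (min_le_left _ _); linarith
    · have := lt_of_lt_of_le h1 (min_le_right _ _); linarith
  have hlim : Tendsto (fun n => ∫ s in S n, (u' s - v' s) ^ 2) atTop
      (𝓝 (∫ s in Set.Ioo a b, (u' s - v' s) ^ 2)) := by
    have := tendsto_setIntegral_of_monotone (μ := volume)
      (f := fun s => (u' s - v' s) ^ 2)
      (fun n : ℕ => by rw [hS]; exact measurableSet_Ioo) hSmono
      (by rw [hUnion]; exact hdw2int)
    rwa [hUnion] at this
  refine le_of_tendsto hlim (Filter.Eventually.of_forall fun n => ?_)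
  -- endpoints
  have hacn : a < a + (b-a)/((n:ℝ)+3) := by linarith [hεpos n]
  have hdnb : b - (b-a)/((n:ℝ)+3) < b := by linarith [hεpos n]
  have hcdn : a + (b-a)/((n:ℝ)+3) < b - (b-a)/((n:ℝ)+3) := by linarith [hεlt n]
  by_cases hM : Mu + Mv = 0
  · -- degenerate: derivative difference vanishes
    have h0 : Set.EqOn (fun s => (u' s - v' s) ^ 2) (fun _ => (0:ℝ)) (S n) := by
      intro s hs
      have hs' := hSsub n hs
      have h1 := hMu' s hs'; have h2 := hMv' s hs'
      have h3 : u' s = 0 := by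
        have := abs_nonneg (u' s); have := abs_nonneg (v' s)
        have : |u' s| = 0 := le_antisymm (by linarith) (abs_nonneg _)
        exact abs_eq_zero.1 this
      have h4 : v' s = 0 := by
        have := abs_nonneg (u' s); have := abs_nonneg (v' s)
        have : |v' s| = 0 := le_antisymm (by linarith) (abs_nonneg _)
        exact abs_eq_zero.1 this
      simp [h3, h4]
    have : ∫ s in S n, (u' s - v' s) ^ 2 = 0 := by
      rw [setIntegral_congr_fun (by rw [hS]; exact measurableSet_Ioo) h0]
      simp
    rw [this]; exact hRHS0
  · have hMpos : 0 < Mu + Mv := lt_of_le_of_ne (by positivity) (Ne.symm hM)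
    by_cases hQz : (∫ s in Set.Ioo a b, (u s - v s) ^ 2) = 0
    · -- Q = 0 : LHS over S n is ≤ ε for all ε > 0
      have hle0 : ∫ s in S n, (u' s - v' s) ^ 2 ≤ 0 := by
        have hall : ∀ ε : ℝ, 0 < ε → ∫ s in S n, (u' s - v' s) ^ 2 ≤ 0 + ε := by
          intro ε hε
          obtain ⟨h, hh1, hh2⟩ : ∃ h : ℝ, 0 < h ∧
              h ≤ (b - (b-a)/((n:ℝ)+3)) - (a + (b-a)/((n:ℝ)+3)) ∧
              3 * (Mu + Mv) ^ 2 * h ≤ ε := by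
            refine ⟨min (ε / (3 * (Mu + Mv) ^ 2)) ((b - (b-a)/((n:ℝ)+3)) - (a + (b-a)/((n:ℝ)+3))),
              lt_min (by positivity) (by linarith), min_le_right _ _, ?_⟩
            have h1 := min_le_left (ε / (3 * (Mu + Mv) ^ 2))
              ((b - (b-a)/((n:ℝ)+3)) - (a + (b-a)/((n:ℝ)+3)))
            have h2 : 3 * (Mu + Mv) ^ 2 * (ε / (3 * (Mu + Mv) ^ 2)) = ε := by field_simp
            have h3 : (0:ℝ) < 3 * (Mu + Mv) ^ 2 := by positivity
            nlinarith [h1, h2, h3]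
          have hkb := key_bound hMu hMv hu hv hu' hv' hMu' hMv' hacn hcdn hdnb hh1 hh2.1
          rw [hS]
          rw [hQz] at hkb
          calc ∫ s in Set.Ioo (a + (b-a)/((n:ℝ)+3)) (b - (b-a)/((n:ℝ)+3)), (u' s - v' s) ^ 2
              ≤ 4 * 0 / h ^ 2 + 3 * (Mu + Mv) ^ 2 * h := hkb
            _ ≤ 0 + ε := by
                have h4 : (4:ℝ) * 0 / h ^ 2 = 0 := by norm_num
                rw [h4]
                linarith [hh2.2]
        exact le_of_forall_pos_le_add hall
      exact hle0.trans hRHS0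
    · have hQpos : 0 < ∫ s in Set.Ioo a b, (u s - v s) ^ 2 :=
        lt_of_le_of_ne hQ0 (Ne.symm hQz)
      obtain ⟨hcalc1, hcalc2⟩ := aux_final_calc hMpos hQpos
      obtain ⟨h0, hh0⟩ : ∃ h0 : ℝ, h0 = (∫ s in Set.Ioo a b, (u s - v s) ^ 2) ^ ((1:ℝ)/3)
          * (((Mu + Mv)) ^ ((2:ℝ)/3))⁻¹ := ⟨_, rfl⟩
      have hh0pos : 0 < h0 := by
        rw [hh0]
        have := Real.rpow_pos_of_pos hQpos ((1:ℝ)/3)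
        have := Real.rpow_pos_of_pos hMpos ((2:ℝ)/3)
        positivity
      have hnonneg : 0 ≤ (Mu + Mv) ^ ((4:ℝ)/3)
          * (∫ s in Set.Ioo a b, (u s - v s) ^ 2) ^ ((1:ℝ)/3) :=
        mul_nonneg (Real.rpow_nonneg (by linarith) _) (Real.rpow_nonneg hQ0 _)
      rcases le_or_gt h0 ((b - (b-a)/((n:ℝ)+3)) - (a + (b-a)/((n:ℝ)+3))) with hle | hgt
      · have hkb := key_bound hMu hMv hu hv hu' hv' hMu' hMv' hacn hcdn hdnb hh0pos hle
        rw [hS]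
        calc ∫ s in Set.Ioo (a + (b-a)/((n:ℝ)+3)) (b - (b-a)/((n:ℝ)+3)), (u' s - v' s) ^ 2
            ≤ 4 * (∫ s in Set.Ioo a b, (u s - v s) ^ 2) / h0 ^ 2
              + 3 * (Mu + Mv) ^ 2 * h0 := hkb
          _ = 7 * (Mu + Mv) ^ ((4:ℝ)/3)
              * (∫ s in Set.Ioo a b, (u s - v s) ^ 2) ^ ((1:ℝ)/3) := by
              rw [hh0]; exact hcalc1
          _ ≤ 8 * (Mu + Mv) ^ ((4:ℝ)/3)
              * (∫ s in Set.Ioo a b, (u s - v s) ^ 2) ^ ((1:ℝ)/3) := by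
              nlinarith [hnonneg]
      · -- trivial bound
        have htriv : ∫ s in S n, (u' s - v' s) ^ 2
            ≤ (Mu + Mv) ^ 2 * ((b - (b-a)/((n:ℝ)+3)) - (a + (b-a)/((n:ℝ)+3))) := by
          have h1 : ∫ s in S n, (u' s - v' s) ^ 2 ≤ ∫ _s in S n, (Mu + Mv) ^ 2 := by
            refine setIntegral_mono_on (hdw2int.mono_set (hSsub n))
              (integrableOn_const ?_) (by rw [hS]; exact measurableSet_Ioo)
              (fun s hs => ?_)
            · rw [hS]; exact measure_Ioo_lt_top.ne
            · have h2 := abs_le.1 (hdwM s (hSsub n hs))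
              exact sq_le_sq' h2.1 h2.2
          rw [hS] at h1 ⊢
          rw [setIntegral_const, Real.volume_real_Ioo_of_le (by linarith)] at h1
          rw [smul_eq_mul] at h1
          linarith
        calc ∫ s in S n, (u' s - v' s) ^ 2
            ≤ (Mu + Mv) ^ 2 * ((b - (b-a)/((n:ℝ)+3)) - (a + (b-a)/((n:ℝ)+3))) := htriv
          _ ≤ (Mu + Mv) ^ 2 * h0 := by
              apply mul_le_mul_of_nonneg_left hgt.le (by positivity)
          _ = (Mu + Mv) ^ ((4:ℝ)/3)
              * (∫ s in Set.Ioo a b, (u s - v s) ^ 2) ^ ((1:ℝ)/3) := by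
              rw [hh0]; exact hcalc2
          _ ≤ 8 * (Mu + Mv) ^ ((4:ℝ)/3)
              * (∫ s in Set.Ioo a b, (u s - v s) ^ 2) ^ ((1:ℝ)/3) := by
              nlinarith [hnonneg]
end

section
/- Let U ⊆ [0,1] be relatively open in [0,1] and let 1_U : [0,1] → ℝ be its indicator function. Then the number of connected components of U (a value in ℕ ∪ {∞}) satisfies #components(U) ≤ 1 + (1/2)·Var(1_U; [0,1]), where Var(1_U; [0,1]) denotes the (possibly infinite) pointwise total variation of 1_U over [0,1]. -/
open scoped ENNReal

open Set

/-- If the closed interval between two points of `U` lies in `U`, they are in the same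
connected component of `U`. -/
lemma same_comp_aux {U : Set ℝ} {x y : ℝ} (hx : x ∈ U) (hy : y ∈ U)
    (hxy : x ≤ y) (h : Set.Icc x y ⊆ U) :
    (ConnectedComponents.mk (⟨x, hx⟩ : U)) = ConnectedComponents.mk ⟨y, hy⟩ := by
  rw [ConnectedComponents.coe_eq_coe']
  have hpre : IsPreconnected (Subtype.val ⁻¹' Set.Icc x y : Set U) := by
    rw [← Topology.IsInducing.subtypeVal.isPreconnected_image, Subtype.image_preimage_coe,
      Set.inter_eq_right.mpr h]
    exact isPreconnected_Icc
  exact hpre.subset_connectedComponent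
    (by simp [Set.mem_Icc, hxy]) (by simp [Set.mem_Icc, hxy])

/-- If `U ⊆ [0,1]` has at least `n+2` connected components, the variation of its indicator
on `[0,1]` is at least `2*(n+1)`. -/
lemma var_ge_aux {U : Set ℝ} (hU : U ⊆ Set.Icc 0 1) (n : ℕ)
    (f : Fin (n + 2) ↪ ConnectedComponents U) :
    (2 * (n + 1) : ℝ≥0∞) ≤ eVariationOn (U.indicator fun _ => (1 : ℝ)) (Set.Icc 0 1) := by
  classical
  -- choose representatives
  have hg : ∀ i : Fin (n + 2), ∃ p : U, ConnectedComponents.mk p = f i := fun i =>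
    ConnectedComponents.surjective_coe (f i)
  choose g hgf using hg
  have hginj : Function.Injective fun i => ((g i : U) : ℝ) := by
    intro i j hij
    apply f.injective
    rw [← hgf i, ← hgf j]
    congr 1
    exact Subtype.ext hij
  set T : Finset ℝ := Finset.univ.image (fun i => ((g i : U) : ℝ)) with hT
  have hTcard : T.card = n + 2 := by
    rw [hT, Finset.card_image_of_injective _ hginj, Finset.card_univ, Fintype.card_fin]
  set e := T.orderIsoOfFin hTcard with he
  set x : Fin (n + 2) → ℝ := fun i => (e i : ℝ) with hx
  have hxmono : StrictMono x := fun i j hij => by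
    exact_mod_cast e.strictMono hij
  have hxT : ∀ i, x i ∈ T := fun i => (e i).2
  have hxU : ∀ i, x i ∈ U := by
    intro i
    obtain ⟨j, _, hj⟩ := Finset.mem_image.mp (hxT i)
    rw [← hj]; exact (g j).2
  -- distinct points of T are in distinct components
  have hkey : ∀ i j : Fin (n + 2), i ≠ j →
      ConnectedComponents.mk (⟨x i, hxU i⟩ : U) ≠ ConnectedComponents.mk ⟨x j, hxU j⟩ := by
    intro i j hij hEq
    obtain ⟨a, _, ha⟩ := Finset.mem_image.mp (hxT i)
    obtain ⟨b, _, hb⟩ := Finset.mem_image.mp (hxT j)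
    have h1 : (⟨x i, hxU i⟩ : U) = g a := Subtype.ext ha.symm
    have h2 : (⟨x j, hxU j⟩ : U) = g b := Subtype.ext hb.symm
    rw [h1, h2, hgf a, hgf b] at hEq
    have hab : a = b := f.injective hEq
    exact hij (hxmono.injective (by rw [← ha, ← hb, hab]))
  -- between consecutive points there is a gap
  have hgap : ∀ k : ℕ, ∀ hk : k < n + 1,
      ∃ z, z ∈ Set.Icc (x ⟨k, by omega⟩) (x ⟨k + 1, by omega⟩) ∧ z ∉ U := by
    intro k hk
    by_contra hcon
    push_neg at hcon
    have hsub : Set.Icc (x ⟨k, by omega⟩) (x ⟨k + 1, by omega⟩) ⊆ U := fun z hz => hcon z hz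
    have hle : x ⟨k, by omega⟩ ≤ x ⟨k + 1, by omega⟩ :=
      (hxmono (by simp [Fin.lt_def])).le
    exact hkey ⟨k, by omega⟩ ⟨k + 1, by omega⟩ (by simp [Fin.ext_iff])
      (same_comp_aux (hxU _) (hxU _) hle hsub)
  choose! y hy hyU using hgap
  -- build the zigzag sequence
  set X : ℕ → ℝ := fun k => x ⟨min k (n + 1), by omega⟩ with hX
  set Y : ℕ → ℝ := fun k => if h : k < n + 1 then y k else x ⟨n + 1, by omega⟩ with hY
  set u : ℕ → ℝ := fun j => if Even j then X (j / 2) else Y (j / 2) with hu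
  have hXeq : ∀ k : ℕ, ∀ h : k ≤ n + 1, X k = x ⟨k, by omega⟩ := by
    intro k h
    simp only [hX]
    exact congrArg x (Fin.mk_eq_mk.mpr (by omega))
  have hXeq' : ∀ k : ℕ, n + 1 ≤ k → X k = x ⟨n + 1, by omega⟩ := by
    intro k h
    simp only [hX]
    exact congrArg x (Fin.mk_eq_mk.mpr (by omega))
  have hXY : ∀ k : ℕ, X k ≤ Y k := by
    intro k
    by_cases h : k < n + 1
    · have h1 := (hy k h).1
      rw [hXeq k (by omega)]
      simp only [hY, dif_pos h]
      exact h1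
    · rw [hXeq' k (by omega)]
      simp only [hY, dif_neg h]
      exact le_rfl
  have hYX : ∀ k : ℕ, Y k ≤ X (k + 1) := by
    intro k
    by_cases h : k < n + 1
    · have h2 := (hy k h).2
      rw [hXeq (k + 1) (by omega)]
      simp only [hY, dif_pos h]
      exact h2
    · rw [hXeq' (k + 1) (by omega)]
      simp only [hY, dif_neg h]
      exact le_rfl
  have hue : ∀ k : ℕ, u (2 * k) = X k := by
    intro k
    simp only [hu, if_pos (even_two_mul k)]
    congr 1; omega
  have huo : ∀ k : ℕ, u (2 * k + 1) = Y k := by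
    intro k
    have : ¬ Even (2 * k + 1) := by simp [Nat.even_add_one, Nat.even_mul]
    simp only [hu, if_neg this]
    congr 1; omega
  have humono : Monotone u := by
    apply monotone_nat_of_le_succ
    intro j
    rcases Nat.even_or_odd j with ⟨k, hk⟩ | ⟨k, hk⟩
    · have hj : j = 2 * k := by omega
      rw [hj, hue k, huo k]; exact hXY k
    · have hj : j = 2 * k + 1 := by omega
      rw [hj, huo k, show 2 * k + 1 + 1 = 2 * (k + 1) from by ring, hue (k + 1)]
      exact hYX k
  have huI : ∀ j : ℕ, u j ∈ Set.Icc (0 : ℝ) 1 := by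
    intro j
    have hXI : ∀ k, X k ∈ Set.Icc (0 : ℝ) 1 := fun k => hU (hxU _)
    have hYI : ∀ k, Y k ∈ Set.Icc (0 : ℝ) 1 := by
      intro k
      by_cases h : k < n + 1
      · simp only [hY, dif_pos h]
        have := hy k h
        exact ⟨le_trans (hU (hxU _)).1 this.1, le_trans this.2 (hU (hxU _)).2⟩
      · simp only [hY, dif_neg h]; exact hU (hxU _)
    by_cases h : Even j
    · simp only [hu, if_pos h]; exact hXI _
    · simp only [hu, if_neg h]; exact hYI _
  -- evaluate the indicator along the sequence
  set F : ℝ → ℝ := U.indicator fun _ => (1 : ℝ) with hF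
  have hFX : ∀ k, F (X k) = 1 := fun k => Set.indicator_of_mem (hxU _) _
  have hFY : ∀ k, k < n + 1 → F (Y k) = 0 := by
    intro k h
    simp only [hY, dif_pos h]
    exact Set.indicator_of_notMem (hyU k h) _
  have hedist : ∀ i ∈ Finset.range (2 * (n + 1)), edist (F (u (i + 1))) (F (u i)) = 1 := by
    intro i hi
    rw [Finset.mem_range] at hi
    have hone : edist (0 : ℝ) 1 = 1 := by
      rw [edist_dist]
      norm_num
    rcases Nat.even_or_odd i with ⟨k, hk⟩ | ⟨k, hk⟩
    · have hik : i = 2 * k := by omega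
      have hk' : k < n + 1 := by omega
      subst hik
      rw [hue k, huo k, hFX k, hFY k hk', hone]
    · have hik : i = 2 * k + 1 := by omega
      have hk' : k < n + 1 := by omega
      subst hik
      rw [show 2 * k + 1 + 1 = 2 * (k + 1) from by ring, hue (k + 1), huo k, hFX (k + 1),
        hFY k hk', edist_comm, hone]
  calc (2 * (n + 1) : ℝ≥0∞)
      = ∑ i ∈ Finset.range (2 * (n + 1)), edist (F (u (i + 1))) (F (u i)) := by
        rw [Finset.sum_congr rfl hedist, Finset.sum_const, Finset.card_range]
        simp [mul_add]
    _ ≤ eVariationOn F (Set.Icc 0 1) := eVariationOn.sum_le (f := F) humono huI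

theorem stmt_14 (U : Set ℝ) (hU : U ⊆ Set.Icc 0 1)
    (hopen : ∃ V : Set ℝ, IsOpen V ∧ U = V ∩ Set.Icc 0 1) :
    (ENat.card (ConnectedComponents U) : ℝ≥0∞)
      ≤ 1 + (1 / 2) * eVariationOn (U.indicator fun _ => (1 : ℝ)) (Set.Icc 0 1) := by
  classical
  cases finite_or_infinite (ConnectedComponents U) with
  | inl h =>
    have : Fintype (ConnectedComponents U) := Fintype.ofFinite _
    rw [ENat.card_eq_coe_fintype_card]
    set m := Fintype.card (ConnectedComponents U) with hm
    rcases le_or_gt m 1 with hm1 | hm1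
    · refine le_trans ?_ le_self_add
      have : ((m : ℕ∞) : ℝ≥0∞) ≤ ((1 : ℕ∞) : ℝ≥0∞) := by
        exact_mod_cast hm1
      simpa using this
    · obtain ⟨n, hn⟩ : ∃ n, m = n + 2 := ⟨m - 2, by omega⟩
      have f : Fin (n + 2) ↪ ConnectedComponents U :=
        (Fintype.equivFinOfCardEq (by rw [← hm, hn])).symm.toEmbedding
      have hvar := var_ge_aux hU n f
      have hhalf : ((n : ℝ≥0∞) + 1) ≤ (1 / 2) * eVariationOn (U.indicator fun _ => (1 : ℝ))
          (Set.Icc 0 1) := by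
        calc ((n : ℝ≥0∞) + 1) = (1 / 2) * (2 * (n + 1)) := by
              rw [← mul_assoc, show (1 / 2 : ℝ≥0∞) * 2 = 1 from by
                rw [one_div]
                exact ENNReal.inv_mul_cancel two_ne_zero ENNReal.ofNat_ne_top, one_mul]
          _ ≤ _ := mul_le_mul_right hvar _
      calc ((m : ℕ∞) : ℝ≥0∞) = (n : ℝ≥0∞) + 2 := by
            rw [hn]; push_cast; ring
        _ = 1 + ((n : ℝ≥0∞) + 1) := by ring
        _ ≤ _ := add_le_add_right hhalf 1
  | inr h =>
    have hvar : eVariationOn (U.indicator fun _ => (1 : ℝ)) (Set.Icc 0 1) = ⊤ := by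
      by_contra hcon
      obtain ⟨N, hN⟩ := ENNReal.exists_nat_gt hcon
      have f : Fin (N + 2) ↪ ConnectedComponents U :=
        Fin.valEmbedding.trans (Infinite.natEmbedding _)
      have hvar := var_ge_aux hU N f
      have : (N : ℝ≥0∞) ≤ 2 * (N + 1) := by
        calc (N : ℝ≥0∞) ≤ ((2 * (N + 1) : ℕ) : ℝ≥0∞) := by
              exact_mod_cast Nat.le_of_lt (by omega)
          _ = 2 * ((N : ℝ≥0∞) + 1) := by push_cast; ring
      exact absurd (this.trans hvar) (not_le.mpr hN)
    rw [hvar]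
    simp [ENNReal.mul_top]
end
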